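/- arXiv:1401.1860 — 3 statements merged into one kernel-verified Lean document; each statement's English description precedes it below -/
import Mathlib

section
/- Let C > 0, α > 1, and let (μ_k)_{k≥0} be a nonincreasing sequence of reals with 0 ≤ μ_k ≤ C/(k+1) for all k. Then there exists a constant K such that for every integer n ≥ 1: ∑_{k=0}^∞ μ_k^α·(1 − exp(−(n·μ_k)^{−α})) ≤ K·n^{1−α} and ∑_{k=0}^∞ exp(−(n·μ_k)^{−α}) ≤ K·n, where terms with μ_k = 0 are interpreted as 0. -/
private lemma key_telescope {α : ℝ} (hα : 1 < α) {k : ℕ} (hk : 1 ≤ k) :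
    (α - 1) * ((k : ℝ) + 1) ^ (-α) ≤ (k : ℝ) ^ (1 - α) - ((k : ℝ) + 1) ^ (1 - α) := by
  set a : ℝ := (k : ℝ) with ha
  have ha0 : 0 < a := by exact_mod_cast Nat.cast_pos.mpr hk
  set b : ℝ := a + 1 with hbdef
  have hb0 : 0 < b := by positivity
  have hab : 0 < a / b := by positivity
  have hlog : 1 - a / b ≤ Real.log (b / a) := by
    have h1 := Real.log_le_sub_one_of_pos hab
    have h2 : Real.log (b / a) = - Real.log (a / b) := by
      rw [← Real.log_inv, inv_div]
    linarith
  have hpow : 1 + (α - 1) * Real.log (b / a) ≤ (b / a) ^ (α - 1) := by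
    rw [Real.rpow_def_of_pos (by positivity)]
    have := Real.add_one_le_exp (Real.log (b / a) * (α - 1))
    linarith [this, mul_comm (α - 1) (Real.log (b / a))]
  have hsplit : (b / a) ^ (α - 1) = b ^ (α - 1) * a ^ (1 - α) := by
    rw [Real.div_rpow hb0.le ha0.le, show (1 - α) = -(α - 1) by ring,
      Real.rpow_neg ha0.le, div_eq_mul_inv]
  have hαβ : 0 < α - 1 := by linarith
  have hmain : 1 + (α - 1) * (1 / b) ≤ b ^ (α - 1) * a ^ (1 - α) := by
    have hfrac : 1 - a / b = 1 / b := by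
      rw [hbdef]; field_simp; ring
    calc 1 + (α - 1) * (1 / b) = 1 + (α - 1) * (1 - a / b) := by rw [hfrac]
      _ ≤ 1 + (α - 1) * Real.log (b / a) := by nlinarith
      _ ≤ (b / a) ^ (α - 1) := hpow
      _ = b ^ (α - 1) * a ^ (1 - α) := hsplit
  have hP : 0 < b ^ (1 - α) := Real.rpow_pos_of_pos hb0 _
  have e1 : b ^ (α - 1) * b ^ (1 - α) = 1 := by
    rw [← Real.rpow_add hb0]; norm_num
  have e2 : b ^ (1 - α) = b * b ^ (-α) := by
    rw [show (1 - α : ℝ) = 1 + (-α) by ring, Real.rpow_add hb0, Real.rpow_one]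
  have hmul := mul_le_mul_of_nonneg_right hmain hP.le
  have h3 : b ^ (α - 1) * a ^ (1 - α) * b ^ (1 - α) = a ^ (1 - α) := by
    rw [mul_comm (b ^ (α - 1)) (a ^ (1 - α)), mul_assoc, e1, mul_one]
  have h4 : (1 + (α - 1) * (1 / b)) * b ^ (1 - α) = b ^ (1 - α) + (α - 1) * b ^ (-α) := by
    rw [e2]; field_simp
  rw [h3, h4] at hmul
  linarith

private lemma tail_sum {α : ℝ} (hα : 1 < α) {N : ℕ} (hN : 1 ≤ N) (m : ℕ) :
    ∑ k ∈ Finset.Ico N m, ((k : ℝ) + 1) ^ (-α) ≤ (N : ℝ) ^ (1 - α) / (α - 1) := by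
  have hαβ : 0 < α - 1 := by linarith
  have key : ∀ m : ℕ, (∑ k ∈ Finset.Ico N m, ((k : ℝ) + 1) ^ (-α))
      + ((max N m : ℕ) : ℝ) ^ (1 - α) / (α - 1) ≤ (N : ℝ) ^ (1 - α) / (α - 1) := by
    intro m
    induction m with
    | zero =>
      rw [Finset.Ico_eq_empty (by omega), Finset.sum_empty,
        show max N 0 = N from by omega, zero_add]
    | succ m ih =>
      rcases le_or_gt (m + 1) N with h | h
      · rw [Finset.Ico_eq_empty (by omega), Finset.sum_empty,
          show max N (m+1) = N from by omega, zero_add]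
      · have hNm : N ≤ m := by omega
        rw [Finset.sum_Ico_succ_top hNm, show max N (m+1) = m + 1 from by omega]
        rw [show max N m = m from by omega] at ih
        have hkt := key_telescope hα (le_trans hN hNm)
        have hcast : ((m + 1 : ℕ) : ℝ) = (m : ℝ) + 1 := by push_cast; ring
        rw [hcast]
        have h2 : ((m : ℝ) + 1) ^ (-α) + ((m : ℝ) + 1) ^ (1 - α) / (α - 1)
            ≤ (m : ℝ) ^ (1 - α) / (α - 1) := by
          rw [← sub_nonneg]
          have heq : (m : ℝ) ^ (1 - α) / (α - 1)
              - (((m : ℝ) + 1) ^ (-α) + ((m : ℝ) + 1) ^ (1 - α) / (α - 1))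
              = ((m : ℝ) ^ (1 - α) - ((m : ℝ) + 1) ^ (1 - α)
                - (α - 1) * ((m : ℝ) + 1) ^ (-α)) / (α - 1) := by
            field_simp
            ring
          rw [heq]
          exact div_nonneg (by linarith) hαβ.le
        linarith
  have hkey := key m
  have hnn : 0 ≤ ((max N m : ℕ) : ℝ) ^ (1 - α) / (α - 1) := by positivity
  linarith

/-- Let `C > 0`, `α > 1`, and let `(μ_k)` be a nonincreasing sequence of
reals with `0 ≤ μ_k ≤ C/(k+1)`.  Then there is a constant `K` such that for every `n ≥ 1`,
`∑_k μ_k^α (1 - exp(-(n μ_k)^{-α})) ≤ K n^{1-α}` and `∑_k exp(-(n μ_k)^{-α}) ≤ K n`,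
terms with `μ_k = 0` being interpreted as `0`. -/
theorem stmt3 (C α : ℝ) (hC : 0 < C) (hα : 1 < α) (μ : ℕ → ℝ)
    (hmono : ∀ ⦃k l : ℕ⦄, k ≤ l → μ l ≤ μ k)
    (h0 : ∀ k, 0 ≤ μ k) (hb : ∀ k, μ k ≤ C / ((k : ℝ) + 1)) :
    ∃ K : ℝ, ∀ n : ℕ, 1 ≤ n →
      (∑' k : ℕ, if μ k = 0 then (0 : ℝ) else
          μ k ^ α * (1 - Real.exp (-(((n : ℝ) * μ k) ^ (-α))))) ≤ K * (n : ℝ) ^ (1 - α) ∧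
      (∑' k : ℕ, if μ k = 0 then (0 : ℝ) else
          Real.exp (-(((n : ℝ) * μ k) ^ (-α)))) ≤ K * (n : ℝ) := by
  have hα0 : (0 : ℝ) ≤ α := by linarith
  have hαβ : (0 : ℝ) < α - 1 := by linarith
  set M : ℕ := ⌈C⌉₊ + 1 with h

  set K1 : ℝ := (M : ℝ) + C ^ α / (α - 1) with hK1
  set K2 : ℝ := C * Real.exp (1 + 1 / C) with hK2
  have hK1pos : 0 < K1 := by
    have : (0:ℝ) < (M : ℝ) := by positivity
    have : 0 < C ^ α / (α - 1) := by positivity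
    positivity
  have hK2pos : 0 < K2 := by positivity
  refine ⟨K1 + K2, fun n hn => ?_⟩
  have hn0 : (0 : ℝ) < n := by exact_mod_cast hn
  have hn1 : (1 : ℝ) ≤ n := by exact_mod_cast hn
  have hnC : (0 : ℝ) < (n : ℝ) * C := by positivity
  have hCM : C ≤ (M : ℝ) := by
    calc C ≤ (⌈C⌉₊ : ℝ) := Nat.le_ceil C
      _ ≤ (M : ℝ) := by exact_mod_cast Nat.le_succ _
  -- basic facts about terms
  have hμpos : ∀ k, μ k ≠ 0 → 0 < μ k := fun k h => (h0 k).lt_of_ne (Ne.symm h)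
  constructor
  · -- first sum
    set f : ℕ → ℝ := fun k => if μ k = 0 then (0 : ℝ) else
      μ k ^ α * (1 - Real.exp (-(((n : ℝ) * μ k) ^ (-α)))) with hf
    have hfnn : ∀ k, 0 ≤ f k := by
      intro k
      simp only [hf]
      split
      · exact le_rfl
      · next hne =>
        apply mul_nonneg (Real.rpow_nonneg (h0 k) _)
        have hx : (0:ℝ) ≤ ((n : ℝ) * μ k) ^ (-α) :=
          Real.rpow_nonneg (mul_nonneg hn0.le (h0 k)) _
        have : Real.exp (-(((n : ℝ) * μ k) ^ (-α))) ≤ 1 :=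
          Real.exp_le_one_iff.mpr (by linarith)
        linarith
    -- bound A
    have hA : ∀ k, f k ≤ (n : ℝ) ^ (-α) := by
      intro k
      simp only [hf]
      split
      · positivity
      · next hne =>
        have hμk := hμpos k hne
        set x : ℝ := ((n : ℝ) * μ k) ^ (-α) with hx
        have hx0 : 0 ≤ x := Real.rpow_nonneg (mul_nonneg hn0.le (h0 k)) _
        have h1 : 1 - Real.exp (-x) ≤ x := by
          have := Real.add_one_le_exp (-x)
          linarith
        have h2 : μ k ^ α * x = (n : ℝ) ^ (-α) := by
          rw [hx, Real.mul_rpow hn0.le (h0 k), ← mul_assoc, mul_comm (μ k ^ α),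
            mul_assoc, ← Real.rpow_add hμk]
          norm_num
        calc μ k ^ α * (1 - Real.exp (-x)) ≤ μ k ^ α * x :=
              mul_le_mul_of_nonneg_left h1 (Real.rpow_nonneg (h0 k) _)
          _ = (n : ℝ) ^ (-α) := h2
    -- bound B
    have hB : ∀ k, f k ≤ C ^ α * ((k : ℝ) + 1) ^ (-α) := by
      intro k
      simp only [hf]
      split
      · positivity
      · next hne =>
        have hμk := hμpos k hne
        have hk1 : (0:ℝ) < (k : ℝ) + 1 := by positivity
        have h1 : 1 - Real.exp (-(((n : ℝ) * μ k) ^ (-α))) ≤ 1 := by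
          have := Real.exp_pos (-(((n : ℝ) * μ k) ^ (-α)))
          linarith
        have h2 : μ k ^ α ≤ C ^ α * ((k : ℝ) + 1) ^ (-α) := by
          calc μ k ^ α ≤ (C / ((k:ℝ)+1)) ^ α := Real.rpow_le_rpow (h0 k) (hb k) hα0
            _ = C ^ α * ((k : ℝ) + 1) ^ (-α) := by
              rw [Real.div_rpow hC.le hk1.le, Real.rpow_neg hk1.le, div_eq_mul_inv]
        calc μ k ^ α * (1 - Real.exp (-(((n : ℝ) * μ k) ^ (-α))))
            ≤ μ k ^ α * 1 := mul_le_mul_of_nonneg_left h1 (Real.rpow_nonneg (h0 k) _)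
          _ = μ k ^ α := mul_one _
          _ ≤ _ := h2
    -- partial sums
    have hpartial : ∀ m, ∑ k ∈ Finset.range m, f k ≤ K1 * (n : ℝ) ^ (1 - α) := by
      intro m
      set N : ℕ := M * n with hN
      have hN1 : 1 ≤ N := Nat.one_le_iff_ne_zero.mpr (by positivity)
      have hNn : n ≤ N := Nat.le_mul_of_pos_left n (by omega)
      have hsub : ∑ k ∈ Finset.range m, f k ≤ ∑ k ∈ Finset.range (max m N), f k :=
        Finset.sum_le_sum_of_subset_of_nonneg
          (Finset.range_subset_range.mpr (le_max_left _ _)) (fun i _ _ => hfnn i)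
      have hsplit : ∑ k ∈ Finset.range (max m N), f k
          = ∑ k ∈ Finset.range N, f k + ∑ k ∈ Finset.Ico N (max m N), f k := by
        rw [Finset.range_eq_Ico, Finset.range_eq_Ico]
        exact (Finset.sum_Ico_consecutive f (Nat.zero_le N) (le_max_right m N)).symm
      have hfirst : ∑ k ∈ Finset.range N, f k ≤ (N : ℝ) * (n : ℝ) ^ (-α) := by
        calc ∑ k ∈ Finset.range N, f k ≤ ∑ _k ∈ Finset.range N, (n : ℝ) ^ (-α) :=
              Finset.sum_le_sum (fun k _ => hA k)
          _ = (N : ℝ) * (n : ℝ) ^ (-α) := by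
            rw [Finset.sum_const, Finset.card_range, nsmul_eq_mul]
      have hNval : (N : ℝ) = (M : ℝ) * (n : ℝ) := by push_cast [hN]; ring
      have hnpow : (n : ℝ) * (n : ℝ) ^ (-α) = (n : ℝ) ^ (1 - α) := by
        rw [show (1 - α : ℝ) = 1 + (-α) by ring, Real.rpow_add hn0, Real.rpow_one]
      have hsecond : ∑ k ∈ Finset.Ico N (max m N), f k
          ≤ C ^ α / (α - 1) * (n : ℝ) ^ (1 - α) := by
        calc ∑ k ∈ Finset.Ico N (max m N), f k
            ≤ ∑ k ∈ Finset.Ico N (max m N), C ^ α * ((k : ℝ) + 1) ^ (-α) :=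
              Finset.sum_le_sum (fun k _ => hB k)
          _ = C ^ α * ∑ k ∈ Finset.Ico N (max m N), ((k : ℝ) + 1) ^ (-α) := by
              rw [Finset.mul_sum]
          _ ≤ C ^ α * ((N : ℝ) ^ (1 - α) / (α - 1)) := by
              apply mul_le_mul_of_nonneg_left (tail_sum hα hN1 _) (by positivity)
          _ ≤ C ^ α * ((n : ℝ) ^ (1 - α) / (α - 1)) := by
              have hle : (N : ℝ) ^ (1 - α) ≤ (n : ℝ) ^ (1 - α) :=
                Real.rpow_le_rpow_of_nonpos hn0 (by exact_mod_cast hNn) (by linarith)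
              gcongr
          _ = C ^ α / (α - 1) * (n : ℝ) ^ (1 - α) := by ring
      have : (N : ℝ) * (n : ℝ) ^ (-α) = (M : ℝ) * (n : ℝ) ^ (1 - α) := by
        rw [hNval, mul_assoc, hnpow]
      calc ∑ k ∈ Finset.range m, f k ≤ _ := hsub
        _ = _ := hsplit
        _ ≤ (N : ℝ) * (n : ℝ) ^ (-α) + C ^ α / (α - 1) * (n : ℝ) ^ (1 - α) :=
            add_le_add hfirst hsecond
        _ = K1 * (n : ℝ) ^ (1 - α) := by rw [this, hK1]; ring
    have h1 := Real.tsum_le_of_sum_range_le hfnn hpartial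
    have hnp : 0 < (n : ℝ) ^ (1 - α) := Real.rpow_pos_of_pos hn0 _
    calc ∑' k, f k ≤ K1 * (n : ℝ) ^ (1 - α) := h1
      _ ≤ (K1 + K2) * (n : ℝ) ^ (1 - α) := by nlinarith
  · -- second sum
    set g : ℕ → ℝ := fun k => if μ k = 0 then (0 : ℝ) else
      Real.exp (-(((n : ℝ) * μ k) ^ (-α))) with hg
    have hgnn : ∀ k, 0 ≤ g k := by
      intro k; simp only [hg]; split
      · exact le_refl 0
      · exact (Real.exp_pos _).le
    set r : ℝ := Real.exp (-(1 / ((n : ℝ) * C))) with hr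
    have hr0 : 0 ≤ r := (Real.exp_pos _).le
    have hr1 : r < 1 := Real.exp_lt_one_iff.mpr (neg_lt_zero.mpr (by positivity))
    -- pointwise bound
    have hGB : ∀ k, g k ≤ Real.exp 1 * r ^ (k + 1) := by
      intro k
      have hk1 : (0:ℝ) < (k : ℝ) + 1 := by positivity
      have hrpow : r ^ (k + 1) = Real.exp (-(((k : ℝ) + 1) / ((n : ℝ) * C))) := by
        rw [hr, ← Real.exp_nat_mul]
        congr 1
        push_cast
        ring
      simp only [hg]
      rw [hrpow, ← Real.exp_add]
      split
      · positivity
      · next hne =>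
        have hμk := hμpos k hne
        rw [Real.exp_le_exp]
        set t : ℝ := ((k : ℝ) + 1) / ((n : ℝ) * C) with ht
        have ht0 : 0 < t := by positivity
        -- need : -((n μ)^{-α}) ≤ 1 - t, i.e. t ≤ 1 + (n μ)^{-α}
        have hnμ : (0:ℝ) < (n : ℝ) * μ k := by positivity
        have hxt : t ≤ 1 + ((n : ℝ) * μ k) ^ (-α) := by
          have hx0 : 0 ≤ ((n : ℝ) * μ k) ^ (-α) := Real.rpow_nonneg hnμ.le _
          rcases le_or_gt t 1 with h | h
          · linarith
          · have h1 : t ≤ t ^ α := by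
              calc t = t ^ (1:ℝ) := (Real.rpow_one t).symm
                _ ≤ t ^ α := Real.rpow_le_rpow_of_exponent_le h.le hα.le
            have h2 : t ^ α ≤ ((n : ℝ) * μ k) ^ (-α) := by
              have hinv : t ≤ ((n : ℝ) * μ k)⁻¹ := by
                have hub : (n : ℝ) * μ k ≤ (n : ℝ) * C / ((k : ℝ) + 1) := by
                  rw [mul_div_assoc]
                  exact mul_le_mul_of_nonneg_left (hb k) hn0.le
                have h6 := one_div_le_one_div_of_le hnμ hub
                rw [one_div_div] at h6
                rw [ht, inv_eq_one_div]
                exact h6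
              calc t ^ α ≤ (((n : ℝ) * μ k)⁻¹) ^ α :=
                    Real.rpow_le_rpow ht0.le hinv hα0
                _ = ((n : ℝ) * μ k) ^ (-α) := by
                    rw [Real.inv_rpow hnμ.le, ← Real.rpow_neg hnμ.le]
            linarith
        linarith
    -- partial sums
    have hgpartial : ∀ m, ∑ k ∈ Finset.range m, g k ≤ K2 * (n : ℝ) := by
      intro m
      have hgeom : ∑ k ∈ Finset.range m, r ^ (k + 1) ≤ 1 / (1 - r) := by
        calc ∑ k ∈ Finset.range m, r ^ (k + 1) = r * ∑ k ∈ Finset.range m, r ^ k := by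
              rw [Finset.mul_sum]; exact Finset.sum_congr rfl fun k _ => by ring
          _ ≤ 1 * (1 / (1 - r)) := by
              apply mul_le_mul hr1.le ?_ ?_ zero_le_one
              · have hg0 := geom_sum_Ico_le_of_lt_one hr0 hr1 (m := 0) (n := m)
                rw [Finset.range_eq_Ico]
                simpa using hg0
              · apply Finset.sum_nonneg fun k _ => pow_nonneg hr0 k
          _ = 1 / (1 - r) := one_mul _
      have hs : (0:ℝ) < 1 / ((n : ℝ) * C) := by positivity
      set s : ℝ := 1 / ((n : ℝ) * C) with hsdef
      have hsC : s ≤ 1 / C := by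
        rw [hsdef]
        exact one_div_le_one_div_of_le hC (le_mul_of_one_le_left hC.le hn1)
      have hlow : s * Real.exp (-(1/C)) ≤ 1 - r := by
        have h1 : s * Real.exp (-s) ≤ 1 - Real.exp (-s) := by
          have h2 := Real.add_one_le_exp s
          have h3 : Real.exp (-s) = (Real.exp s)⁻¹ := Real.exp_neg s
          have h4 : 0 < Real.exp s := Real.exp_pos s
          rw [h3]
          rw [← sub_nonneg]
          have : 1 - (Real.exp s)⁻¹ - s * (Real.exp s)⁻¹
              = (Real.exp s - 1 - s) / Real.exp s := by field_simp
          rw [this]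
          apply div_nonneg (by linarith) h4.le
        have h5 : Real.exp (-(1/C)) ≤ Real.exp (-s) := by
          rw [Real.exp_le_exp]; linarith
        have := mul_le_mul_of_nonneg_left h5 hs.le
        rw [hr]; linarith
      have hlowpos : 0 < s * Real.exp (-(1/C)) := by positivity
      have hinv : 1 / (1 - r) ≤ (n : ℝ) * C * Real.exp (1/C) := by
        calc 1 / (1 - r) ≤ 1 / (s * Real.exp (-(1/C))) :=
              one_div_le_one_div_of_le hlowpos hlow
          _ = (n : ℝ) * C * Real.exp (1/C) := by
            rw [hsdef, Real.exp_neg, one_div, one_div, mul_inv, inv_inv, inv_inv]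
      calc ∑ k ∈ Finset.range m, g k ≤ ∑ k ∈ Finset.range m, Real.exp 1 * r ^ (k+1) :=
            Finset.sum_le_sum fun k _ => hGB k
        _ = Real.exp 1 * ∑ k ∈ Finset.range m, r ^ (k+1) := by rw [Finset.mul_sum]
        _ ≤ Real.exp 1 * (1 / (1 - r)) :=
            mul_le_mul_of_nonneg_left hgeom (Real.exp_pos 1).le
        _ ≤ Real.exp 1 * ((n : ℝ) * C * Real.exp (1/C)) :=
            mul_le_mul_of_nonneg_left hinv (Real.exp_pos 1).le
        _ = K2 * (n : ℝ) := by rw [hK2, Real.exp_add]; ring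
    have h2 := Real.tsum_le_of_sum_range_le hgnn hgpartial
    calc ∑' k, g k ≤ K2 * (n : ℝ) := h2
      _ ≤ (K1 + K2) * (n : ℝ) := by nlinarith
end

section
/- Let C, M > 0 and α > 1. Let (μ_k)_{k≥0} be a nonincreasing sequence of reals with 0 ≤ μ_k ≤ C/(k+1), and let (a_k)_{k≥0} be complex numbers with |a_k| ≤ M for all k. Then there exists a constant K such that for every integer n ≥ 1, |∑_{k=0}^∞ μ_k·exp(−(n·μ_k)^{−α})·a_k − ∑_{k : μ_k ≥ 1/n} μ_k·a_k| ≤ K, where terms with μ_k = 0 are interpreted as 0 (both sums converge absolutely). -/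
private lemma lower_eq_range (t : Finset ℕ) (h : ∀ j k : ℕ, j ≤ k → k ∈ t → j ∈ t) :
    t = Finset.range t.card := by
  have sub : t ⊆ Finset.range t.card := by
    intro k hk
    rw [Finset.mem_range]
    have h1 : Finset.range (k+1) ⊆ t := fun j hj =>
      h j k (Nat.lt_succ_iff.mp (Finset.mem_range.mp hj)) hk
    have := Finset.card_le_card h1
    simpa using this
  exact Finset.eq_of_subset_of_card_le sub (by simp)

private lemma exp_neg_le (y : ℝ) (hy : 0 < y) : Real.exp (-y) ≤ 4 / y ^ 2 := by
  have h1 : y / 2 + 1 ≤ Real.exp (y / 2) := Real.add_one_le_exp _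
  have h2 : Real.exp (y / 2) ^ 2 = Real.exp y := by
    rw [sq, ← Real.exp_add]; ring_nf
  have h3 : y ^ 2 / 4 ≤ Real.exp y := by
    nlinarith [Real.exp_pos (y / 2)]
  rw [Real.exp_neg, ← one_div, div_le_div_iff₀ (Real.exp_pos y) (by positivity)]
  nlinarith

set_option maxHeartbeats 2000000 in
/-- For a nonincreasing sequence `0 ≤ μ_k ≤ C/(k+1)`, bounded complex
coefficients `|a_k| ≤ M` and `α > 1`, one has
`|∑_k μ_k exp(−(n μ_k)^{−α}) a_k − ∑_{k : μ_k ≥ 1/n} μ_k a_k| = O(1)`,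
terms with `μ_k = 0` being interpreted as `0`. -/
theorem stmt5 (C M α : ℝ) (hC : 0 < C) (hM : 0 < M) (hα : 1 < α)
    (μ : ℕ → ℝ) (a : ℕ → ℂ)
    (hmono : ∀ ⦃k l : ℕ⦄, k ≤ l → μ l ≤ μ k)
    (h0 : ∀ k, 0 ≤ μ k) (hb : ∀ k, μ k ≤ C / ((k : ℝ) + 1))
    (ha : ∀ k, ‖a k‖ ≤ M) :
    ∃ K : ℝ, ∀ n : ℕ, 1 ≤ n →
      ‖(∑' k : ℕ, if μ k = 0 then (0 : ℂ) else
          ((μ k * Real.exp (-(((n : ℝ) * μ k) ^ (-α))) : ℝ) : ℂ) * a k)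
        - ∑ k ∈ Finset.range (Nat.card {k : ℕ | 1 / (n : ℝ) ≤ μ k}), ((μ k : ℝ) : ℂ) * a k‖
        ≤ K := by
  classical
  refine ⟨13 * M * C, ?_⟩
  intro n hn
  have hn1 : (1:ℝ) ≤ (n:ℝ) := by exact_mod_cast hn
  have hnpos : (0:ℝ) < (n:ℝ) := by linarith
  set f : ℕ → ℂ := fun k => if μ k = 0 then (0 : ℂ) else
      ((μ k * Real.exp (-(((n : ℝ) * μ k) ^ (-α))) : ℝ) : ℂ) * a k with hfdef
  set N := Nat.card {k : ℕ | 1 / (n : ℝ) ≤ μ k} with hNdef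
  set J := Nat.floor (C * (n:ℝ)) with hJdef
  have hJle : (J:ℝ) ≤ C * n := Nat.floor_le (by positivity)
  have hJgt : C * (n:ℝ) < (J:ℝ) + 1 := Nat.lt_floor_add_one _
  -- finiteness of the level set
  have hSsub : {k : ℕ | 1 / (n : ℝ) ≤ μ k} ⊆ Set.Iic J := by
    intro k hk
    simp only [Set.mem_setOf_eq] at hk
    have h1 : 1 / (n:ℝ) ≤ C / ((k:ℝ)+1) := hk.trans (hb k)
    have hk1 : (0:ℝ) < (k:ℝ)+1 := by positivity
    rw [div_le_div_iff₀ hnpos hk1] at h1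
    have hkC : (k:ℝ) ≤ C * n := by linarith
    exact Set.mem_Iic.mpr (Nat.le_floor hkC)
  have hSfin : {k : ℕ | 1 / (n : ℝ) ≤ μ k}.Finite := (Set.finite_Iic _).subset hSsub
  have hNcard : N = hSfin.toFinset.card := by
    rw [hNdef, Nat.card_coe_set_eq, Set.ncard_eq_toFinset_card _ hSfin]
  have hmem : ∀ k, k < N ↔ 1 / (n:ℝ) ≤ μ k := by
    have hlow : hSfin.toFinset = Finset.range hSfin.toFinset.card := by
      apply lower_eq_range
      intro j k hjk hk
      simp only [Set.Finite.mem_toFinset, Set.mem_setOf_eq] at *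
      exact le_trans hk (hmono hjk)
    intro k
    rw [hNcard, ← Finset.mem_range, ← hlow]
    simp [Set.Finite.mem_toFinset]
  have hNle : (N:ℝ) ≤ C * n := by
    rcases Nat.eq_zero_or_pos N with h | h
    · rw [h]; push_cast; positivity
    · have h1 : N - 1 < N := Nat.sub_lt h one_pos
      have h2 : 1 / (n:ℝ) ≤ μ (N-1) := (hmem _).mp h1
      have h3 : μ (N-1) ≤ C / (((N-1:ℕ):ℝ)+1) := hb _
      have h4 : (((N-1:ℕ):ℝ)+1) = (N:ℝ) := by
        have : (1:ℕ) ≤ N := h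
        push_cast [Nat.cast_sub this]
        ring
      rw [h4] at h3
      have hNpos : (0:ℝ) < (N:ℝ) := by exact_mod_cast h
      have h5 : 1 / (n:ℝ) ≤ C / (N:ℝ) := h2.trans h3
      rw [div_le_div_iff₀ hnpos hNpos] at h5
      linarith
  -- global pointwise bound
  have hfb : ∀ k, 0 < μ k → ‖f k‖ ≤ 4 * M * (n:ℝ)^2 * μ k ^ 3 := by
    intro k hk
    have hkne : μ k ≠ 0 := ne_of_gt hk
    have hx : (0:ℝ) < (n:ℝ) * μ k := by positivity
    have hcore : Real.exp (-(((n:ℝ) * μ k) ^ (-α))) ≤ 4 * ((n:ℝ) * μ k)^2 := by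
      rcases le_or_gt ((n:ℝ) * μ k) 1 with hx1 | hx1
      · have hy : 0 < ((n:ℝ) * μ k) ^ (-α) := Real.rpow_pos_of_pos hx _
        have h1 := exp_neg_le _ hy
        have h2 : ((n:ℝ) * μ k) ^ (-α) = (((n:ℝ) * μ k) ^ α)⁻¹ := Real.rpow_neg hx.le α
        have h3 : ((n:ℝ) * μ k) ^ α ≤ (n:ℝ) * μ k := by
          have := Real.rpow_le_rpow_of_exponent_ge hx hx1 hα.le
          rwa [Real.rpow_one] at this
        have hxa : 0 < ((n:ℝ) * μ k) ^ α := Real.rpow_pos_of_pos hx _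
        have h4 : 4 / (((n:ℝ) * μ k) ^ (-α))^2 = 4 * (((n:ℝ) * μ k) ^ α)^2 := by
          rw [h2]; field_simp
        refine h1.trans ?_
        rw [h4]
        have h5 : (((n:ℝ) * μ k) ^ α)^2 ≤ ((n:ℝ) * μ k)^2 :=
          pow_le_pow_left₀ hxa.le h3 2
        nlinarith
      · have hy : 0 ≤ ((n:ℝ) * μ k) ^ (-α) := Real.rpow_nonneg hx.le _
        have h1 : Real.exp (-(((n:ℝ) * μ k) ^ (-α))) ≤ 1 := by
          calc Real.exp (-(((n:ℝ) * μ k) ^ (-α))) ≤ Real.exp 0 :=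
                Real.exp_le_exp.mpr (by linarith)
            _ = 1 := Real.exp_zero
        nlinarith
    have hnorm : ‖f k‖ = (μ k * Real.exp (-(((n:ℝ) * μ k) ^ (-α)))) * ‖a k‖ := by
      rw [hfdef]
      simp only [if_neg hkne]
      rw [norm_mul, Complex.norm_real, Real.norm_eq_abs,
        abs_of_nonneg (by positivity : (0:ℝ) ≤ μ k * Real.exp (-(((n:ℝ) * μ k) ^ (-α))))]
    rw [hnorm]
    have hcore' : μ k * Real.exp (-(((n:ℝ) * μ k) ^ (-α))) ≤ 4 * (n:ℝ)^2 * μ k ^ 3 := by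
      have := mul_le_mul_of_nonneg_left hcore hk.le
      nlinarith
    calc (μ k * Real.exp (-(((n:ℝ) * μ k) ^ (-α)))) * ‖a k‖
        ≤ (4 * (n:ℝ)^2 * μ k ^ 3) * M :=
          mul_le_mul hcore' (ha k) (norm_nonneg _) (by positivity)
      _ = 4 * M * (n:ℝ)^2 * μ k ^ 3 := by ring
  have hsum : Summable f := by
    have hs3 : Summable (fun k : ℕ => 1/((k:ℝ)+1)^3) := by
      have h1 : Summable (fun k : ℕ => 1/((k:ℝ))^3) :=
        Real.summable_one_div_nat_pow.mpr (by norm_num)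
      have h2 := (summable_nat_add_iff 1).mpr h1
      refine h2.congr fun k => ?_
      push_cast; ring
    apply Summable.of_norm_bounded (g := fun k : ℕ => (4*M*(n:ℝ)^2*C^3) * (1/((k:ℝ)+1)^3))
      (hs3.mul_left _)
    intro k
    rcases eq_or_lt_of_le (h0 k) with h | h
    · have hfk : f k = 0 := by rw [hfdef]; simp [← h]
      rw [hfk, norm_zero]; positivity
    · refine (hfb k h).trans ?_
      have hk1 : (0:ℝ) < (k:ℝ)+1 := by positivity
      have h1 : μ k ^ 3 ≤ (C/((k:ℝ)+1))^3 := pow_le_pow_left₀ (h0 k) (hb k) 3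
      calc 4*M*(n:ℝ)^2*μ k^3 ≤ 4*M*(n:ℝ)^2*(C/((k:ℝ)+1))^3 := by
            have := mul_le_mul_of_nonneg_left h1 (show (0:ℝ) ≤ 4*M*(n:ℝ)^2 by positivity)
            linarith
        _ = (4*M*(n:ℝ)^2*C^3) * (1/((k:ℝ)+1)^3) := by
            rw [div_pow]; ring
  -- split the sum
  have hsplit : ∑' k, f k = ∑ i ∈ Finset.range N, f i + ∑' i, f (i + N) :=
    (Summable.sum_add_tsum_nat_add N hsum).symm
  have key : (∑' k, f k) - ∑ k ∈ Finset.range N, ((μ k : ℝ) : ℂ) * a k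
      = (∑ k ∈ Finset.range N, (f k - ((μ k : ℝ) : ℂ) * a k)) + ∑' i, f (i + N) := by
    rw [hsplit, Finset.sum_sub_distrib]; ring
  rw [key]
  have head : ‖∑ k ∈ Finset.range N, (f k - ((μ k : ℝ) : ℂ) * a k)‖ ≤ M * C := by
    have hterm : ∀ k ∈ Finset.range N, ‖f k - ((μ k : ℝ) : ℂ) * a k‖ ≤ M / n := by
      intro k hk
      have h1 : 1/(n:ℝ) ≤ μ k := (hmem k).mp (Finset.mem_range.mp hk)
      have hμpos : 0 < μ k := lt_of_lt_of_le (by positivity) h1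
      have hkne : μ k ≠ 0 := ne_of_gt hμpos
      have hx1 : (1:ℝ) ≤ (n:ℝ) * μ k := by
        rw [div_le_iff₀ hnpos] at h1
        nlinarith
      have hy0 : 0 ≤ ((n:ℝ) * μ k) ^ (-α) := Real.rpow_nonneg (by positivity) _
      have hyle : ((n:ℝ) * μ k) ^ (-α) ≤ ((n:ℝ) * μ k)⁻¹ := by
        have h2 : ((n:ℝ) * μ k) ^ (-α) ≤ ((n:ℝ) * μ k) ^ (-1:ℝ) :=
          Real.rpow_le_rpow_of_exponent_le hx1 (by linarith)
        rwa [Real.rpow_neg_one] at h2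
      have hexp1 : Real.exp (-(((n:ℝ) * μ k) ^ (-α))) ≤ 1 := by
        calc Real.exp (-(((n:ℝ) * μ k) ^ (-α))) ≤ Real.exp 0 :=
              Real.exp_le_exp.mpr (by linarith)
          _ = 1 := Real.exp_zero
      have hexp2 : 1 - ((n:ℝ) * μ k) ^ (-α) ≤ Real.exp (-(((n:ℝ) * μ k) ^ (-α))) := by
        have := Real.add_one_le_exp (-(((n:ℝ) * μ k) ^ (-α)))
        linarith
      have heq : f k - ((μ k : ℝ) : ℂ) * a k
          = (((μ k * Real.exp (-(((n:ℝ) * μ k) ^ (-α))) - μ k : ℝ)) : ℂ) * a k := by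
        rw [hfdef]
        simp only [if_neg hkne]
        push_cast
        ring
      rw [heq, norm_mul, Complex.norm_real, Real.norm_eq_abs]
      have habs : |μ k * Real.exp (-(((n:ℝ) * μ k) ^ (-α))) - μ k| ≤ 1/(n:ℝ) := by
        rw [abs_of_nonpos (by nlinarith)]
        have h3 : μ k * (1 - Real.exp (-(((n:ℝ) * μ k) ^ (-α))))
            ≤ μ k * (((n:ℝ) * μ k) ^ (-α)) := by nlinarith
        have h4 : μ k * (((n:ℝ) * μ k) ^ (-α)) ≤ μ k * ((n:ℝ) * μ k)⁻¹ :=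
          mul_le_mul_of_nonneg_left hyle hμpos.le
        have h5 : μ k * ((n:ℝ) * μ k)⁻¹ = 1/(n:ℝ) := by
          field_simp
        nlinarith
      calc |μ k * Real.exp (-(((n:ℝ) * μ k) ^ (-α))) - μ k| * ‖a k‖
          ≤ (1/(n:ℝ)) * M := mul_le_mul habs (ha k) (norm_nonneg _) (by positivity)
        _ = M / n := by ring
    calc ‖∑ k ∈ Finset.range N, (f k - ((μ k : ℝ) : ℂ) * a k)‖
        ≤ ∑ k ∈ Finset.range N, ‖f k - ((μ k : ℝ) : ℂ) * a k‖ := norm_sum_le _ _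
      _ ≤ ∑ _k ∈ Finset.range N, M/(n:ℝ) := Finset.sum_le_sum hterm
      _ = (N:ℝ) * (M/(n:ℝ)) := by
          rw [Finset.sum_const, Finset.card_range, nsmul_eq_mul]
      _ ≤ (C*(n:ℝ)) * (M/(n:ℝ)) :=
          mul_le_mul_of_nonneg_right hNle (by positivity)
      _ = M * C := by field_simp
  have tail : ‖∑' i, f (i + N)‖ ≤ 12 * M * C := by
    set g : ℕ → ℝ := fun k => 1/((k:ℝ)+1) with hgdef
    have hg0 : ∀ k, 0 < g k := fun k => by rw [hgdef]; positivity
    have hganti : ∀ k, g (k+1) ≤ g k := by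
      intro k
      rw [hgdef]
      apply one_div_le_one_div_of_le (by positivity)
      push_cast
      linarith
    set w : ℕ → ℝ := fun k =>
      if k < J then 4*M/(n:ℝ) else 8*M*C*((J:ℝ)+1)*(g k - g (k+1)) with hwdef
    have hw0 : ∀ k, 0 ≤ w k := by
      intro k
      rw [hwdef]
      by_cases hk : k < J
      · simp only [if_pos hk]; positivity
      · simp only [if_neg hk]
        have := hganti k
        have hJ1 : (0:ℝ) ≤ 8*M*C*((J:ℝ)+1) := by positivity
        nlinarith
    -- pointwise bound on the tail
    have hwb : ∀ k, N ≤ k → ‖f k‖ ≤ w k := by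
      intro k hk
      have hμlt : μ k < 1/(n:ℝ) := by
        by_contra hcon
        push_neg at hcon
        exact absurd ((hmem k).mpr hcon) (not_lt.mpr hk)
      rcases eq_or_lt_of_le (h0 k) with h | h
      · have hfk : f k = 0 := by rw [hfdef]; simp [← h]
        rw [hfk, norm_zero]; exact hw0 k
      · refine (hfb k h).trans ?_
        rw [hwdef]
        by_cases hkJ : k < J
        · simp only [if_pos hkJ]
          have h6 : ((n:ℝ)*μ k)^3 ≤ 1 := by
            refine pow_le_one₀ (by positivity) (le_of_lt ?_)
            rw [div_eq_mul_inv] at hμlt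
            calc (n:ℝ)*μ k < (n:ℝ)*(1*(n:ℝ)⁻¹) := by
                  apply mul_lt_mul_of_pos_left _ hnpos
                  simpa using hμlt
              _ = 1 := by field_simp
          rw [le_div_iff₀ hnpos]
          nlinarith
        · simp only [if_neg hkJ]
          push_neg at hkJ
          have hd : (J:ℝ)+1 ≤ (k:ℝ)+1 := by
            have : (J:ℝ) ≤ (k:ℝ) := by exact_mod_cast hkJ
            linarith
          have hgd : g k - g (k+1) = 1/(((k:ℝ)+1)*((k:ℝ)+2)) := by
            rw [hgdef]
            push_cast
            rw [div_sub_div _ _ (by positivity : ((k:ℝ)+1) ≠ 0)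
              (by positivity : ((k:ℝ)+1+1) ≠ 0)]
            rw [div_eq_div_iff (by positivity) (by positivity)]
            ring
          have hA : (0:ℝ) < (k:ℝ)+1 := by positivity
          have hP : (0:ℝ) < (J:ℝ)+1 := by positivity
          have huA : μ k * ((k:ℝ)+1) ≤ C := by
            rw [← le_div_iff₀ hA]
            exact hb k
          have hcube : (μ k)^3 * ((k:ℝ)+1)^3 ≤ C^3 := by
            have h7 := pow_le_pow_left₀ (by positivity : (0:ℝ) ≤ μ k * ((k:ℝ)+1)) huA 3
            calc (μ k)^3*((k:ℝ)+1)^3 = (μ k*((k:ℝ)+1))^3 := by ring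
              _ ≤ C^3 := h7
          have hnC : (n:ℝ)*C ≤ (J:ℝ)+1 := by nlinarith [hJgt]
          rw [hgd, mul_one_div, le_div_iff₀ (by positivity : (0:ℝ) < ((k:ℝ)+1)*((k:ℝ)+2))]
          -- goal : 4*M*n^2*μ^3 * ((k+1)*(k+2)) ≤ 8*M*C*(J+1)
          have hB : (k:ℝ)+2 ≤ 2*((k:ℝ)+1) := by
            have : (0:ℝ) ≤ (k:ℝ) := Nat.cast_nonneg k
            linarith
          have step1 : 4*M*(n:ℝ)^2*μ k^3 * (((k:ℝ)+1)*((k:ℝ)+2))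
              ≤ 8*M*(n:ℝ)^2*(μ k^3 * ((k:ℝ)+1)^2) := by
            have h9 := mul_le_mul_of_nonneg_left hB
              (show (0:ℝ) ≤ 4*M*(n:ℝ)^2*μ k^3*((k:ℝ)+1) by positivity)
            nlinarith [h9]
          have step2 : μ k^3 * ((k:ℝ)+1)^2 ≤ C^3/((J:ℝ)+1) := by
            rw [le_div_iff₀ hP]
            calc μ k^3 * ((k:ℝ)+1)^2 * ((J:ℝ)+1) ≤ μ k^3 * ((k:ℝ)+1)^2 * ((k:ℝ)+1) := by
                  apply mul_le_mul_of_nonneg_left hd (by positivity)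
              _ = μ k^3 * ((k:ℝ)+1)^3 := by ring
              _ ≤ C^3 := hcube
          have step3 : 8*M*(n:ℝ)^2*(C^3/((J:ℝ)+1)) ≤ 8*M*C*((J:ℝ)+1) := by
            have heq2 : 8*M*(n:ℝ)^2*(C^3/((J:ℝ)+1)) = (8*M*(n:ℝ)^2*C^3)/((J:ℝ)+1) := by
              ring
            rw [heq2, div_le_iff₀ hP]
            have hnC2 : ((n:ℝ)*C)^2 ≤ ((J:ℝ)+1)^2 :=
              pow_le_pow_left₀ (by positivity) hnC 2
            have h8 := mul_le_mul_of_nonneg_left hnC2 (show (0:ℝ) ≤ 8*M*C by positivity)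
            nlinarith [h8]
          calc 4*M*(n:ℝ)^2*μ k^3 * (((k:ℝ)+1)*((k:ℝ)+2))
              ≤ 8*M*(n:ℝ)^2*(μ k^3 * ((k:ℝ)+1)^2) := step1
            _ ≤ 8*M*(n:ℝ)^2*(C^3/((J:ℝ)+1)) := by
                apply mul_le_mul_of_nonneg_left step2 (by positivity)
            _ ≤ 8*M*C*((J:ℝ)+1) := step3
    -- bound on partial sums over any range
    have hrange : ∀ L, ∑ k ∈ Finset.range L, w k ≤ 12*M*C := by
      intro L
      have hsplitw : ∀ k, w k = (if k < J then 4*M/(n:ℝ) else 0)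
          + (if J ≤ k then 8*M*C*((J:ℝ)+1)*(g k - g (k+1)) else 0) := by
        intro k
        rw [hwdef]
        by_cases hk : k < J
        · simp [if_pos hk, if_neg (not_le.mpr hk)]
        · simp [if_neg hk, if_pos (not_lt.mp hk)]
      rw [Finset.sum_congr rfl (fun k _ => hsplitw k), Finset.sum_add_distrib]
      have hu : ∑ k ∈ Finset.range L, (if k < J then 4*M/(n:ℝ) else 0) ≤ 4*M*C := by
        have h1 : ∑ k ∈ Finset.range L, (if k < J then 4*M/(n:ℝ) else 0)
            = ∑ k ∈ (Finset.range L).filter (fun k => k < J), 4*M/(n:ℝ) :=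
          (Finset.sum_filter _ _).symm
        rw [h1, Finset.sum_const, nsmul_eq_mul]
        have hcard : ((Finset.range L).filter (fun k => k < J)).card ≤ J := by
          have hsub : (Finset.range L).filter (fun k => k < J) ⊆ Finset.range J := by
            intro k hk
            rw [Finset.mem_range]
            exact (Finset.mem_filter.mp hk).2
          simpa using Finset.card_le_card hsub
        calc (((Finset.range L).filter (fun k => k < J)).card : ℝ) * (4*M/(n:ℝ))
            ≤ (J:ℝ) * (4*M/(n:ℝ)) := by
              apply mul_le_mul_of_nonneg_right _ (by positivity)
              exact_mod_cast hcard
          _ ≤ (C*(n:ℝ)) * (4*M/(n:ℝ)) :=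
              mul_le_mul_of_nonneg_right hJle (by positivity)
          _ = 4*M*C := by field_simp
      have hv : ∑ k ∈ Finset.range L,
          (if J ≤ k then 8*M*C*((J:ℝ)+1)*(g k - g (k+1)) else 0) ≤ 8*M*C := by
        rcases le_or_gt L J with hLJ | hJL
        · have hz : ∀ k ∈ Finset.range L,
              (if J ≤ k then 8*M*C*((J:ℝ)+1)*(g k - g (k+1)) else 0) = 0 := by
            intro k hk
            rw [Finset.mem_range] at hk
            rw [if_neg]
            omega
          rw [Finset.sum_congr rfl hz, Finset.sum_const, smul_zero]
          positivity
        · rw [Finset.range_eq_Ico, ← Finset.sum_Ico_consecutive _ (Nat.zero_le J) hJL.le]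
          have h1 : ∑ k ∈ Finset.Ico 0 J,
              (if J ≤ k then 8*M*C*((J:ℝ)+1)*(g k - g (k+1)) else 0) = 0 := by
            apply Finset.sum_eq_zero
            intro k hk
            rw [Finset.mem_Ico] at hk
            rw [if_neg]
            omega
          rw [h1, zero_add]
          have h2 : ∑ k ∈ Finset.Ico J L,
              (if J ≤ k then 8*M*C*((J:ℝ)+1)*(g k - g (k+1)) else 0)
              = ∑ k ∈ Finset.Ico J L, 8*M*C*((J:ℝ)+1)*(g k - g (k+1)) := by
            apply Finset.sum_congr rfl
            intro k hk
            rw [if_pos (Finset.mem_Ico.mp hk).1]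
          rw [h2, ← Finset.mul_sum]
          have h3 : ∑ k ∈ Finset.Ico J L, (g k - g (k+1)) = g J - g L := by
            rw [Finset.sum_Ico_eq_sum_range]
            have h4 := Finset.sum_range_sub' (fun i => g (J + i)) (L - J)
            simp only [Nat.add_zero] at h4
            have h6 : J + (L - J) = L := Nat.add_sub_cancel' hJL.le
            rw [h6] at h4
            rw [← h4]
            apply Finset.sum_congr rfl
            intro i _
            rw [Nat.add_assoc]
          rw [h3]
          have h5 : g J - g L ≤ g J := by linarith [hg0 L]
          calc 8*M*C*((J:ℝ)+1)*(g J - g L) ≤ 8*M*C*((J:ℝ)+1)*(g J) :=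
              mul_le_mul_of_nonneg_left h5 (by positivity)
            _ = 8*M*C := by
                rw [hgdef]
                field_simp
      linarith
    -- put tail together
    have hsumN : Summable (fun i => ‖f (i + N)‖) := (summable_nat_add_iff N).mpr hsum.norm
    refine (norm_tsum_le_tsum_norm hsumN).trans ?_
    apply Real.tsum_le_of_sum_range_le (fun i => norm_nonneg _)
    intro m
    calc ∑ i ∈ Finset.range m, ‖f (i + N)‖
        ≤ ∑ i ∈ Finset.range m, w (i + N) :=
          Finset.sum_le_sum (fun i _ => hwb (i+N) (Nat.le_add_left N i))
      _ = ∑ k ∈ Finset.Ico N (N+m), w k := by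
          rw [Finset.sum_Ico_eq_sum_range]
          simp only [Nat.add_sub_cancel_left]
          exact Finset.sum_congr rfl (fun i _ => by rw [add_comm])
      _ ≤ ∑ k ∈ Finset.range (N+m), w k := by
          apply Finset.sum_le_sum_of_subset_of_nonneg
          · intro k hk
            rw [Finset.mem_range]
            exact (Finset.mem_Ico.mp hk).2
          · exact fun k _ _ => hw0 k
      _ ≤ 12*M*C := hrange (N+m)
  calc ‖(∑ k ∈ Finset.range N, (f k - ((μ k : ℝ) : ℂ) * a k)) + ∑' i, f (i + N)‖
      ≤ ‖∑ k ∈ Finset.range N, (f k - ((μ k : ℝ) : ℂ) * a k)‖ + ‖∑' i, f (i + N)‖ :=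
        norm_add_le _ _
    _ ≤ M * C + 12 * M * C := add_le_add head tail
    _ = 13 * M * C := by ring
end

section
/- Let ω be a dilation invariant extended limit, let α > 1, let C > 0, and let (μ_k)_{k≥0} be a nonincreasing sequence of nonnegative reals with ∑_{k=0}^n μ_k ≤ C·log(2+n) for all n ≥ 0. Define x_n = ((n+2)·log(n+2))^{-1} · ∑_{k=0}^∞ exp(−((n+2)·μ_k)^{−α}) for n ≥ 0, where terms with μ_k = 0 are interpreted as 0. Then the sequence (x_n) is bounded and ω((x_n)_{n≥0}) = 0. -/
/-- A bounded real sequence. -/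
def BddSeq (x : ℕ → ℝ) : Prop := ∃ M : ℝ, ∀ n, |x n| ≤ M

/-- A dilation invariant extended limit: a positive linear functional on `ℓ∞` extending
the limit functional and invariant under every dilation `σ_m`, `m ≥ 2`. -/
structure ExtLimit (ω : (ℕ → ℝ) → ℝ) : Prop where
  map_add : ∀ x y : ℕ → ℝ, BddSeq x → BddSeq y → ω (x + y) = ω x + ω y
  map_smul : ∀ (c : ℝ) (x : ℕ → ℝ), BddSeq x → ω (c • x) = c * ω x
  pos : ∀ x : ℕ → ℝ, BddSeq x → (∀ n, 0 ≤ x n) → 0 ≤ ω x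
  extends_limit : ∀ (x : ℕ → ℝ) (l : ℝ), Filter.Tendsto x Filter.atTop (nhds l) → ω x = l
  dilation_invariant : ∀ x : ℕ → ℝ, BddSeq x → ∀ m : ℕ, 2 ≤ m → ω (fun j => x (j / m)) = ω x

namespace Stmt6
open Finset

lemma exp_neg_inv_le {x : ℝ} (hx : 0 < x) : Real.exp (-x⁻¹) ≤ x := by
  have h := Real.log_le_sub_one_of_pos (inv_pos.mpr hx)
  rw [Real.log_inv] at h
  have h2 : -x⁻¹ ≤ Real.log x := by linarith
  calc Real.exp (-x⁻¹) ≤ Real.exp (Real.log x) := Real.exp_le_exp.mpr h2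
    _ = x := Real.exp_log hx

lemma exp_neg_rpow_le {α t : ℝ} (hα : 1 ≤ α) (ht : 0 < t) (ht1 : t ≤ 1) :
    Real.exp (-t ^ (-α)) ≤ 4 * t ^ 2 := by
  have h1 : t ^ α ≤ t := by
    have := Real.rpow_le_rpow_of_exponent_ge ht ht1 hα
    rwa [Real.rpow_one] at this
  have hpow : (0:ℝ) < t ^ α := Real.rpow_pos_of_pos ht α
  have h2 : t⁻¹ ≤ t ^ (-α) := by
    rw [Real.rpow_neg ht.le]
    exact inv_anti₀ hpow h1
  have h3 : Real.exp (-t ^ (-α)) ≤ Real.exp (-t⁻¹) := Real.exp_le_exp.mpr (by linarith)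
  have h4 : Real.exp (-t⁻¹) ≤ 4 * t^2 := by
    have he : -t⁻¹ = -(2*t)⁻¹ + -(2*t)⁻¹ := by
      field_simp
      ring
    rw [he, Real.exp_add]
    have h5 := exp_neg_inv_le (show (0:ℝ) < 2*t by linarith)
    have h6 : (0:ℝ) ≤ Real.exp (-(2*t)⁻¹) := (Real.exp_pos _).le
    nlinarith
  linarith

lemma log_le_two_sqrt {x : ℝ} (hx : 0 < x) : Real.log x ≤ 2 * Real.sqrt x := by
  have h1 : Real.log (Real.sqrt x) ≤ Real.sqrt x - 1 :=
    Real.log_le_sub_one_of_pos (Real.sqrt_pos.mpr hx)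
  rw [Real.log_sqrt hx.le] at h1
  nlinarith [Real.sqrt_nonneg x]

lemma log_le_four_rt4 {x : ℝ} (hx : 0 < x) : Real.log x ≤ 4 * Real.sqrt (Real.sqrt x) := by
  have hs : 0 < Real.sqrt x := Real.sqrt_pos.mpr hx
  have h1 : Real.log (Real.sqrt (Real.sqrt x)) ≤ Real.sqrt (Real.sqrt x) - 1 :=
    Real.log_le_sub_one_of_pos (Real.sqrt_pos.mpr hs)
  rw [Real.log_sqrt hs.le, Real.log_sqrt hx.le] at h1
  nlinarith [Real.sqrt_nonneg (Real.sqrt x)]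

noncomputable def h3 (k : ℕ) : ℝ := (((k:ℝ)+1) * Real.sqrt ((k:ℝ)+1))⁻¹

lemma h3_nonneg (k : ℕ) : 0 ≤ h3 k := by
  unfold h3; positivity

lemma tele_step {k : ℕ} (hk : 1 ≤ k) :
    h3 k ≤ 2 / Real.sqrt (k:ℝ) - 2 / Real.sqrt ((k:ℝ)+1) := by
  have hk1 : (1:ℝ) ≤ (k:ℝ) := by exact_mod_cast hk
  unfold h3
  have ha : 0 < Real.sqrt (k:ℝ) := Real.sqrt_pos.mpr (by linarith)
  have hb : 0 < Real.sqrt ((k:ℝ)+1) := Real.sqrt_pos.mpr (by linarith)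
  have hab : Real.sqrt (k:ℝ) ≤ Real.sqrt ((k:ℝ)+1) := Real.sqrt_le_sqrt (by linarith)
  have ha2 : Real.sqrt (k:ℝ) ^ 2 = (k:ℝ) := Real.sq_sqrt (by linarith)
  have hb2 : Real.sqrt ((k:ℝ)+1) ^ 2 = (k:ℝ)+1 := Real.sq_sqrt (by linarith)
  set a := Real.sqrt (k:ℝ) with hadef
  set b := Real.sqrt ((k:ℝ)+1) with hbdef
  have key : (b - a) * (b + a) = 1 := by nlinarith
  have h7 : 2/a - 2/b = 2*(b-a)/(a*b) := by
    field_simp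
  rw [h7, show ((k:ℝ)+1) = b^2 from hb2.symm, inv_eq_one_div,
    div_le_div_iff₀ (by positivity) (by positivity)]
  have hba : (0:ℝ) < b + a := by linarith
  have h8 : a*b*(b+a) ≤ 2*(b^2*b) := by nlinarith
  have h9 : 2*(b-a)*(b^2*b)*(b+a) = 2*(b^2*b) := by linear_combination (2*(b^2*b)) * key
  have h10 : 1*(a*b)*(b+a) ≤ 2*(b-a)*(b^2*b)*(b+a) := by nlinarith [h8, h9]
  exact le_of_mul_le_mul_right h10 hba

lemma tele_partial (N : ℕ) (hN : 1 ≤ N) (m : ℕ) :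
    ∑ i ∈ range m, h3 (N + i) ≤ 2 / Real.sqrt (N:ℝ) - 2 / Real.sqrt ((N+m:ℕ):ℝ) := by
  induction m with
  | zero => simp
  | succ m ih =>
    rw [Finset.sum_range_succ]
    have hstep := tele_step (k := N+m) (le_trans hN (Nat.le_add_right _ _))
    have hc1 : ((N+m:ℕ):ℝ)+1 = ((N+(m+1):ℕ):ℝ) := by push_cast; ring
    rw [hc1] at hstep
    linarith

lemma h3_summable : Summable h3 := by
  apply summable_of_sum_range_le (c := 3) h3_nonneg
  intro m
  cases m with
  | zero => norm_num
  | succ p =>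
    rw [Finset.sum_range_succ']
    have h0 : h3 0 = 1 := by
      unfold h3; norm_num
    have hp := tele_partial 1 le_rfl p
    have e1 : ∑ i ∈ range p, h3 (i + 1) = ∑ i ∈ range p, h3 (1 + i) := by
      apply Finset.sum_congr rfl; intro i _; rw [Nat.add_comm]
    have e2 : (0:ℝ) ≤ 2 / Real.sqrt ((1+p:ℕ):ℝ) := by positivity
    rw [h0, e1]
    have : Real.sqrt ((1:ℕ):ℝ) = 1 := by norm_num
    rw [this] at hp
    linarith

lemma tele_tsum (N : ℕ) (hN : 1 ≤ N) : ∑' i, h3 (i + N) ≤ 2 / Real.sqrt (N:ℝ) := by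
  apply Summable.tsum_le_of_sum_range_le ((summable_nat_add_iff N).mpr h3_summable)
  intro m
  have hp := tele_partial N hN m
  have e1 : ∑ i ∈ range m, h3 (i + N) = ∑ i ∈ range m, h3 (N + i) := by
    apply Finset.sum_congr rfl; intro i _; rw [Nat.add_comm]
  have e2 : (0:ℝ) ≤ 2 / Real.sqrt ((N+m:ℕ):ℝ) := by positivity
  rw [e1]
  linarith


/- ## mu lemmas -/
section Mu
variable {C : ℝ} {μ : ℕ → ℝ}

lemma mu_le (hmono : ∀ ⦃k l : ℕ⦄, k ≤ l → μ l ≤ μ k) (h0 : ∀ k, 0 ≤ μ k)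
    (hM : ∀ n : ℕ, ∑ k ∈ Finset.range (n + 1), μ k ≤ C * Real.log (2 + (n : ℝ))) (k : ℕ) :
    ((k:ℝ)+1) * μ k ≤ C * Real.log (2 + (k:ℝ)) := by
  have h1 : ((k:ℝ)+1) * μ k ≤ ∑ i ∈ range (k+1), μ i := by
    have hle : ∀ i ∈ range (k+1), μ k ≤ μ i := fun i hi =>
      hmono (Nat.lt_succ_iff.mp (mem_range.mp hi))
    calc ((k:ℝ)+1) * μ k = ∑ _i ∈ range (k+1), μ k := by
          rw [sum_const, card_range, nsmul_eq_mul]; push_cast; ring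
      _ ≤ ∑ i ∈ range (k+1), μ i := sum_le_sum hle
  exact h1.trans (hM k)

lemma mu_sq_le (hC : 0 < C) (hmono : ∀ ⦃k l : ℕ⦄, k ≤ l → μ l ≤ μ k) (h0 : ∀ k, 0 ≤ μ k)
    (hM : ∀ n : ℕ, ∑ k ∈ Finset.range (n + 1), μ k ≤ C * Real.log (2 + (n : ℝ))) (k : ℕ) :
    μ k ^ 2 ≤ 23 * C^2 * h3 k := by
  have hk1 : (0:ℝ) < (k:ℝ)+1 := by positivity
  have h1 : ((k:ℝ)+1) * μ k ≤ C * (4 * Real.sqrt (Real.sqrt (2 + (k:ℝ)))) := by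
    refine (mu_le hmono h0 hM k).trans ?_
    exact mul_le_mul_of_nonneg_left (log_le_four_rt4 (by positivity)) hC.le
  -- square both sides
  have h2 : (((k:ℝ)+1) * μ k)^2 ≤ (C * (4 * Real.sqrt (Real.sqrt (2 + (k:ℝ)))))^2 := by
    have hnn : 0 ≤ ((k:ℝ)+1) * μ k := mul_nonneg (by positivity) (h0 k)
    nlinarith [h1, hnn]
  have hsq : Real.sqrt (Real.sqrt (2+(k:ℝ))) ^ 2 = Real.sqrt (2+(k:ℝ)) :=
    Real.sq_sqrt (Real.sqrt_nonneg _)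
  have h4 : Real.sqrt (2+(k:ℝ)) ≤ Real.sqrt 2 * Real.sqrt ((k:ℝ)+1) := by
    rw [← Real.sqrt_mul (by norm_num)]
    exact Real.sqrt_le_sqrt (by linarith)
  have hr2 : Real.sqrt 2 ≤ 23/16 := by
    rw [show (23/16:ℝ) = Real.sqrt ((23/16)^2) from (Real.sqrt_sq (by norm_num)).symm]
    exact Real.sqrt_le_sqrt (by norm_num)
  have h5 : Real.sqrt (2+(k:ℝ)) ≤ (23/16) * Real.sqrt ((k:ℝ)+1) := by
    refine h4.trans ?_
    exact mul_le_mul_of_nonneg_right hr2 (Real.sqrt_nonneg _)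
  -- (k+1)^2 μ² ≤ 16 C² √(2+k) ≤ 23 C² √(k+1)
  have h6 : (((k:ℝ)+1) * μ k)^2 ≤ 23 * C^2 * Real.sqrt ((k:ℝ)+1) := by
    calc (((k:ℝ)+1) * μ k)^2 ≤ (C * (4 * Real.sqrt (Real.sqrt (2 + (k:ℝ)))))^2 := h2
      _ = 16 * C^2 * Real.sqrt (2+(k:ℝ)) := by rw [mul_pow, mul_pow]; rw [hsq]; ring
      _ ≤ 16 * C^2 * ((23/16) * Real.sqrt ((k:ℝ)+1)) := by
          apply mul_le_mul_of_nonneg_left h5 (by positivity)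
      _ = 23 * C^2 * Real.sqrt ((k:ℝ)+1) := by ring
  -- divide by (k+1)^2 = (k+1)·√(k+1)·√(k+1) ... h3 k = ((k+1)√(k+1))⁻¹
  unfold h3
  have hsk : Real.sqrt ((k:ℝ)+1) ^ 2 = (k:ℝ)+1 := Real.sq_sqrt (by positivity)
  have hskpos : 0 < Real.sqrt ((k:ℝ)+1) := Real.sqrt_pos.mpr (by positivity)
  have h7 : μ k ^ 2 * (((k:ℝ)+1) * Real.sqrt ((k:ℝ)+1)) ≤ 23 * C^2 := by
    have h8 := mul_le_mul_of_nonneg_right h6 hskpos.le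
    nlinarith [h8, hsk, hk1, sq_nonneg (μ k), mul_pos hk1 hskpos]
  calc μ k ^2
      = (μ k ^2 * (((k:ℝ)+1) * Real.sqrt ((k:ℝ)+1))) * (((k:ℝ)+1) * Real.sqrt ((k:ℝ)+1))⁻¹ := by
        field_simp
    _ ≤ 23*C^2 * (((k:ℝ)+1) * Real.sqrt ((k:ℝ)+1))⁻¹ :=
        mul_le_mul_of_nonneg_right h7 (by positivity)


lemma musq_summable (hC : 0 < C) (hmono : ∀ ⦃k l : ℕ⦄, k ≤ l → μ l ≤ μ k) (h0 : ∀ k, 0 ≤ μ k)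
    (hM : ∀ n : ℕ, ∑ k ∈ Finset.range (n + 1), μ k ≤ C * Real.log (2 + (n : ℝ))) :
    Summable (fun k => μ k ^ 2) := by
  apply Summable.of_nonneg_of_le (fun k => sq_nonneg _) (mu_sq_le hC hmono h0 hM)
  exact h3_summable.mul_left _

lemma crude (hC : 0 < C) (hmono : ∀ ⦃k l : ℕ⦄, k ≤ l → μ l ≤ μ k) (h0 : ∀ k, 0 ≤ μ k)
    (hM : ∀ n : ℕ, ∑ k ∈ Finset.range (n + 1), μ k ≤ C * Real.log (2 + (n : ℝ)))
    {s : ℝ} (hs : 0 < s) {k : ℕ} (hk : 1/2 < s * μ k) : (k:ℝ) + 1 < 36 * C^2 * s^2 := by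
  have hk1 : (0:ℝ) < (k:ℝ)+1 := by positivity
  have hμ : 1/(2*s) < μ k := by
    rw [div_lt_iff₀ (by positivity)]
    calc (1:ℝ) = 2 * (1/2) := by norm_num
      _ < 2 * (s * μ k) := by linarith
      _ = μ k * (2*s) := by ring
  have h1 : ((k:ℝ)+1) * (1/(2*s)) < C * Real.log (2+(k:ℝ)) :=
    lt_of_lt_of_le (by apply mul_lt_mul_of_pos_left hμ hk1) (mu_le hmono h0 hM k)
  have h2 : Real.log (2+(k:ℝ)) ≤ 2 * Real.sqrt (2+(k:ℝ)) := log_le_two_sqrt (by positivity)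
  have h4 : Real.sqrt (2+(k:ℝ)) ≤ Real.sqrt 2 * Real.sqrt ((k:ℝ)+1) := by
    rw [← Real.sqrt_mul (by norm_num)]
    exact Real.sqrt_le_sqrt (by linarith)
  have hr2 : Real.sqrt 2 ≤ 3/2 := by
    rw [show (3/2:ℝ) = Real.sqrt ((3/2)^2) from (Real.sqrt_sq (by norm_num)).symm]
    exact Real.sqrt_le_sqrt (by norm_num)
  have hskpos : 0 < Real.sqrt ((k:ℝ)+1) := Real.sqrt_pos.mpr hk1
  have hsk : Real.sqrt ((k:ℝ)+1) ^ 2 = (k:ℝ)+1 := Real.sq_sqrt hk1.le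
  -- (k+1)/(2s) < C·2·(3/2)·√(k+1) = 3C√(k+1)
  have h5 : ((k:ℝ)+1) * (1/(2*s)) < 3 * C * Real.sqrt ((k:ℝ)+1) := by
    have : Real.log (2+(k:ℝ)) ≤ 3 * Real.sqrt ((k:ℝ)+1) := by
      calc Real.log (2+(k:ℝ)) ≤ 2 * Real.sqrt (2+(k:ℝ)) := h2
        _ ≤ 2 * (Real.sqrt 2 * Real.sqrt ((k:ℝ)+1)) := by
            apply mul_le_mul_of_nonneg_left h4 (by norm_num)
        _ ≤ 3 * Real.sqrt ((k:ℝ)+1) := by nlinarith [Real.sqrt_nonneg ((k:ℝ)+1)]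
    calc ((k:ℝ)+1) * (1/(2*s)) < C * Real.log (2+(k:ℝ)) := h1
      _ ≤ C * (3 * Real.sqrt ((k:ℝ)+1)) := mul_le_mul_of_nonneg_left this hC.le
      _ = 3 * C * Real.sqrt ((k:ℝ)+1) := by ring
  -- so √(k+1) < 6Cs, so k+1 < 36 C² s²
  have h6 : Real.sqrt ((k:ℝ)+1) < 6 * C * s := by
    have h7 : Real.sqrt ((k:ℝ)+1)^2 * (1/(2*s)) < 3 * C * Real.sqrt ((k:ℝ)+1) := by
      rw [hsk]; exact h5
    have h8 : Real.sqrt ((k:ℝ)+1) * (1/(2*s)) < 3 * C := by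
      have := (mul_lt_mul_iff_left₀ hskpos).mpr (show (0:ℝ) < 1 by norm_num)
      -- divide h7 by √(k+1)
      by_contra hcon
      push_neg at hcon
      have : 3 * C * Real.sqrt ((k:ℝ)+1) ≤ Real.sqrt ((k:ℝ)+1) * (1/(2*s)) * Real.sqrt ((k:ℝ)+1) := by
        nlinarith [hskpos]
      nlinarith [h7, hsk]
    have hs2 : (0:ℝ) < 2*s := by positivity
    calc Real.sqrt ((k:ℝ)+1) = Real.sqrt ((k:ℝ)+1) * (1/(2*s)) * (2*s) := by field_simp
      _ < 3 * C * (2*s) := by apply mul_lt_mul_of_pos_right h8 hs2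
      _ = 6 * C * s := by ring
  calc (k:ℝ)+1 = Real.sqrt ((k:ℝ)+1)^2 := hsk.symm
    _ < (6*C*s)^2 := by
        have := mul_self_lt_mul_self hskpos.le h6
        nlinarith [this]
    _ = 36 * C^2 * s^2 := by ring

lemma bigsum_le (hC : 0 < C) (hmono : ∀ ⦃k l : ℕ⦄, k ≤ l → μ l ≤ μ k) (h0 : ∀ k, 0 ≤ μ k)
    (hM : ∀ n : ℕ, ∑ k ∈ Finset.range (n + 1), μ k ≤ C * Real.log (2 + (n : ℝ)))
    {s : ℝ} (hs : 2 ≤ s) :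
    ∑' k, (if 1/2 < s * μ k then μ k else 0) ≤ C * (Real.log (1 + 36*C^2) + 2 * Real.log s) := by
  have hs0 : (0:ℝ) < s := by linarith
  set n₀ : ℕ := ⌈36*C^2*s^2⌉₊ with hn₀
  have hceil : 36*C^2*s^2 ≤ (n₀:ℝ) := Nat.le_ceil _
  have hpos : (0:ℝ) < 36*C^2*s^2 := by positivity
  have hn₀1 : 1 ≤ n₀ := Nat.ceil_pos.mpr hpos
  have hvanish : ∀ k ∉ range n₀, (if 1/2 < s * μ k then μ k else 0) = 0 := by
    intro k hk
    rw [if_neg]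
    intro hbig
    have h1 := crude hC hmono h0 hM hs0 hbig
    have hk' : n₀ ≤ k := by simpa using hk
    have hk'' : (n₀:ℝ) ≤ (k:ℝ) := by exact_mod_cast hk'
    linarith
  rw [tsum_eq_sum hvanish]
  have hb1 : ∑ k ∈ range n₀, (if 1/2 < s*μ k then μ k else 0) ≤ ∑ k ∈ range n₀, μ k := by
    apply sum_le_sum
    intro i _
    split_ifs
    · exact le_rfl
    · exact h0 i
  have hsucc : n₀ - 1 + 1 = n₀ := Nat.succ_pred_eq_of_pos hn₀1
  have hb2 : ∑ k ∈ range n₀, μ k ≤ C * Real.log (2 + ((n₀-1:ℕ):ℝ)) := by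
    have := hM (n₀-1)
    rwa [hsucc] at this
  have hcast : ((n₀-1:ℕ):ℝ) = (n₀:ℝ) - 1 := by
    push_cast [hn₀1]
    ring
  have hceil2 : (n₀:ℝ) < 36*C^2*s^2 + 1 := Nat.ceil_lt_add_one hpos.le
  have hle : 2 + ((n₀-1:ℕ):ℝ) ≤ (1+36*C^2) * s^2 := by
    rw [hcast]
    nlinarith [hs]
  have hlog : Real.log (2 + ((n₀-1:ℕ):ℝ)) ≤ Real.log (1+36*C^2) + 2*Real.log s := by
    calc Real.log (2 + ((n₀-1:ℕ):ℝ)) ≤ Real.log ((1+36*C^2) * s^2) :=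
          Real.log_le_log (by positivity) hle
      _ = Real.log (1+36*C^2) + Real.log (s^2) :=
          Real.log_mul (by positivity) (by positivity)
      _ = Real.log (1+36*C^2) + 2*Real.log s := by
          rw [Real.log_pow]; push_cast; ring
  calc ∑ k ∈ range n₀, (if 1/2 < s*μ k then μ k else 0)
      ≤ C * Real.log (2+((n₀-1:ℕ):ℝ)) := hb1.trans hb2
    _ ≤ C * (Real.log (1+36*C^2) + 2*Real.log s) := mul_le_mul_of_nonneg_left hlog hC.le

lemma smallsum_le (hC : 0 < C) (hmono : ∀ ⦃k l : ℕ⦄, k ≤ l → μ l ≤ μ k) (h0 : ∀ k, 0 ≤ μ k)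
    (hM : ∀ n : ℕ, ∑ k ∈ Finset.range (n + 1), μ k ≤ C * Real.log (2 + (n : ℝ)))
    {s : ℝ} (hs : 2 ≤ s) :
    ∑' k, (if 1/2 < s * μ k then 0 else μ k ^ 2) ≤ (3*C/2 * Real.log s + 46*C^2) / s := by
  have hs0 : (0:ℝ) < s := by linarith
  set f : ℕ → ℝ := fun k => if 1/2 < s * μ k then 0 else μ k ^ 2 with hf
  have hfnn : ∀ k, 0 ≤ f k := by
    intro k; simp only [hf]; split_ifs
    · exact le_rfl
    · exact sq_nonneg _
  have hfle : ∀ k, f k ≤ μ k ^ 2 := by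
    intro k; simp only [hf]; split_ifs
    · exact sq_nonneg _
    · exact le_rfl
  have hfsum : Summable f := Summable.of_nonneg_of_le hfnn hfle (musq_summable hC hmono h0 hM)
  set k₀ : ℕ := ⌈s^2⌉₊ with hk₀
  have hceil : s^2 ≤ (k₀:ℝ) := Nat.le_ceil _
  have hk₀1 : 1 ≤ k₀ := Nat.ceil_pos.mpr (by positivity)
  rw [← Summable.sum_add_tsum_nat_add k₀ hfsum]
  -- first part
  have hpart1 : ∑ i ∈ range k₀, f i ≤ (3*C/2 * Real.log s) / s := by
    have hb0 : ∀ i, f i ≤ (1/(2*s)) * μ i := by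
      intro i
      simp only [hf]
      split_ifs with h
      · exact mul_nonneg (by positivity) (h0 i)
      · push_neg at h
        have hμi : μ i ≤ 1/(2*s) := by
          rw [le_div_iff₀ (by positivity)]
          calc μ i * (2*s) = 2*(s * μ i) := by ring
            _ ≤ 2*(1/2) := by linarith
            _ = 1 := by norm_num
        calc μ i ^2 = μ i * μ i := sq (μ i) ▸ by ring
          _ ≤ (1/(2*s)) * μ i := mul_le_mul_of_nonneg_right hμi (h0 i)
    have hb1 : ∑ i ∈ range k₀, f i ≤ (1/(2*s)) * ∑ i ∈ range k₀, μ i := by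
      rw [mul_sum]
      exact sum_le_sum (fun i _ => hb0 i)
    have hsucc : k₀ - 1 + 1 = k₀ := Nat.succ_pred_eq_of_pos hk₀1
    have hb2 : ∑ k ∈ range k₀, μ k ≤ C * Real.log (2 + ((k₀-1:ℕ):ℝ)) := by
      have := hM (k₀-1)
      rwa [hsucc] at this
    have hcast : ((k₀-1:ℕ):ℝ) = (k₀:ℝ) - 1 := by push_cast [hk₀1]; ring
    have hceil2 : (k₀:ℝ) < s^2 + 1 := Nat.ceil_lt_add_one (by positivity)
    have hle : 2 + ((k₀-1:ℕ):ℝ) ≤ 2 * s^2 := by rw [hcast]; nlinarith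
    have hlog : Real.log (2 + ((k₀-1:ℕ):ℝ)) ≤ 3 * Real.log s := by
      have hl2 : Real.log 2 ≤ Real.log s := Real.log_le_log (by norm_num) hs
      calc Real.log (2 + ((k₀-1:ℕ):ℝ)) ≤ Real.log (2 * s^2) :=
            Real.log_le_log (by positivity) hle
        _ = Real.log 2 + Real.log (s^2) := Real.log_mul (by norm_num) (by positivity)
        _ = Real.log 2 + 2*Real.log s := by rw [Real.log_pow]; push_cast; ring
        _ ≤ 3 * Real.log s := by linarith
    have hsum_nn : (0:ℝ) ≤ ∑ i ∈ range k₀, μ i := sum_nonneg (fun i _ => h0 i)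
    calc ∑ i ∈ range k₀, f i ≤ (1/(2*s)) * ∑ i ∈ range k₀, μ i := hb1
      _ ≤ (1/(2*s)) * (C * (3 * Real.log s)) := by
          apply mul_le_mul_of_nonneg_left _ (by positivity)
          calc ∑ i ∈ range k₀, μ i ≤ C * Real.log (2 + ((k₀-1:ℕ):ℝ)) := hb2
            _ ≤ C * (3 * Real.log s) := mul_le_mul_of_nonneg_left hlog hC.le
      _ = (3*C/2 * Real.log s) / s := by field_simp
  -- tail part
  have hpart2 : ∑' i, f (i + k₀) ≤ 46*C^2 / s := by
    have hsummf : Summable (fun i => f (i + k₀)) := (summable_nat_add_iff k₀).mpr hfsum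
    have hsummh : Summable (fun i => 23*C^2 * h3 (i + k₀)) :=
      ((summable_nat_add_iff k₀).mpr h3_summable).mul_left _
    have hple : ∀ i, f (i + k₀) ≤ 23*C^2 * h3 (i + k₀) := fun i =>
      (hfle _).trans (mu_sq_le hC hmono h0 hM _)
    have ht1 : ∑' i, f (i + k₀) ≤ ∑' i, 23*C^2 * h3 (i + k₀) :=
      Summable.tsum_le_tsum hple hsummf hsummh
    have ht2 : ∑' i, 23*C^2 * h3 (i + k₀) = 23*C^2 * ∑' i, h3 (i + k₀) := tsum_mul_left
    have ht3 : ∑' i, h3 (i + k₀) ≤ 2 / Real.sqrt (k₀:ℝ) := tele_tsum k₀ hk₀1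
    have hsq : s ≤ Real.sqrt (k₀:ℝ) := by
      calc s = Real.sqrt (s^2) := (Real.sqrt_sq hs0.le).symm
        _ ≤ Real.sqrt (k₀:ℝ) := Real.sqrt_le_sqrt hceil
    have ht4 : 2 / Real.sqrt (k₀:ℝ) ≤ 2 / s := by
      apply div_le_div_of_nonneg_left (by norm_num) hs0 hsq
    calc ∑' i, f (i + k₀) ≤ 23*C^2 * ∑' i, h3 (i + k₀) := by rw [← ht2]; exact ht1
      _ ≤ 23*C^2 * (2/s) := by
          apply mul_le_mul_of_nonneg_left (ht3.trans ht4) (by positivity)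
      _ = 46*C^2/s := by ring
  have : (3*C/2 * Real.log s) / s + 46*C^2/s = (3*C/2 * Real.log s + 46*C^2) / s := by
    field_simp
  linarith [hpart1, hpart2]

end Mu

/- ## geometric sum lemmas -/

lemma geo_sum (M : ℕ) (t : ℕ → ℝ) (h0 : ∀ i, 0 ≤ t i)
    (hr : ∀ i, i + 1 < M → t (i+1) ≤ 3/4 * t i) :
    ∑ i ∈ range M, t i ≤ 4 * t 0 := by
  induction M generalizing t with
  | zero =>
    simp only [range_zero, sum_empty]
    linarith [h0 0]
  | succ M ih =>
    rw [Finset.sum_range_succ']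
    have ihs := ih (fun i => t (i+1)) (fun i => h0 (i+1)) (fun i hi => hr (i+1) (by omega))
    simp only [zero_add] at ihs
    rcases Nat.eq_zero_or_pos M with hM | hM
    · subst hM
      simp only [range_zero, sum_empty, zero_add]
      linarith [h0 0]
    · have h1 : t 1 ≤ 3/4 * t 0 := hr 0 (by omega)
      linarith [h0 0]

lemma partB (M : ℕ) (t : ℕ → ℝ) (h0 : ∀ i, 0 < t i)
    (hr : ∀ i, i + 1 < M → t (i+1) ≤ 3/4 * t i) :
    ∑ i ∈ range M, (if t i ≤ 1 then t i else 0) ≤ 4 := by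
  suffices h : ∑ i ∈ range M, (if t i ≤ 1 then t i else 0) ≤ if t 0 ≤ 1 then 4 * t 0 else 4 by
    split_ifs at h
    · linarith [h0 0]
    · exact h
  induction M generalizing t with
  | zero =>
    simp only [range_zero, sum_empty]
    split_ifs
    · linarith [h0 0]
    · norm_num
  | succ M ih =>
    rw [Finset.sum_range_succ']
    have ihs := ih (fun i => t (i+1)) (fun i => h0 (i+1)) (fun i hi => hr (i+1) (by omega))
    simp only [zero_add] at ihs
    rcases Nat.eq_zero_or_pos M with hM | hM
    · subst hM
      simp only [range_zero, sum_empty, zero_add]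
      split_ifs with h
      · linarith [h0 0]
      · norm_num
    · have h1 : t 1 ≤ 3/4 * t 0 := hr 0 (by omega)
      by_cases ht0 : t 0 ≤ 1
      · have ht1 : t 1 ≤ 1 := by nlinarith [h0 0]
        rw [if_pos ht1] at ihs
        rw [if_pos ht0, if_pos ht0]
        linarith [h0 0]
      · rw [if_neg ht0, if_neg ht0]
        have hle4 : ∑ i ∈ range M, (if t (i+1) ≤ 1 then t (i+1) else 0) ≤ 4 := by
          split_ifs at ihs
          · linarith [h0 1]
          · exact ihs
        linarith [h0 0]

lemma partA (M : ℕ) (t : ℕ → ℝ) (h0 : ∀ i, 0 < t i)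
    (hr : ∀ i, i + 1 < M → t (i+1) ≤ 3/4 * t i) :
    ∑ i ∈ range M, (if 1 ≤ t i then (t i)⁻¹ else 0) ≤ 4 := by
  suffices h : ∑ i ∈ range M, (if 1 ≤ t i then (t i)⁻¹ else 0) ≤
      if t 0 < 1 then 0 else 4 - 3 / t 0 by
    split_ifs at h
    · linarith
    · have : 0 < 3 / t 0 := div_pos (by norm_num) (h0 0)
      linarith
  induction M generalizing t with
  | zero =>
    simp only [range_zero, sum_empty]
    split_ifs with h
    · exact le_rfl
    · push_neg at h
      have h4 : 3 / t 0 ≤ 3 := by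
        rw [div_le_iff₀ (h0 0)]
        nlinarith [h0 0]
      linarith
  | succ M ih =>
    rw [Finset.sum_range_succ']
    have ihs := ih (fun i => t (i+1)) (fun i => h0 (i+1)) (fun i hi => hr (i+1) (by omega))
    simp only [zero_add] at ihs
    have ht0pos := h0 0
    have ht1pos := h0 1
    have he : (t 0)⁻¹ + 3 / t 0 = 4 / t 0 := by
      field_simp
      norm_num
    rcases Nat.eq_zero_or_pos M with hM | hM
    · subst hM
      simp only [range_zero, sum_empty, zero_add]
      split_ifs with ha hb hb
      · linarith
      · push_neg at hb
        have h4 : 4 / t 0 ≤ 4 := by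
          rw [div_le_iff₀ ht0pos]
          nlinarith
        linarith
      · exact le_rfl
      · push_neg at hb
        linarith
    · have h1 : t 1 ≤ 3/4 * t 0 := hr 0 (by omega)
      by_cases ht0 : t 0 < 1
      · have ht1 : t 1 < 1 := by nlinarith
        rw [if_pos ht1] at ihs
        rw [if_pos ht0, if_neg (by linarith : ¬ (1 ≤ t 0))]
        linarith
      · push_neg at ht0
        rw [if_neg (by linarith : ¬ (t 0 < 1)), if_pos ht0]
        by_cases ht1 : t 1 < 1
        · rw [if_pos ht1] at ihs
          have h4 : 4 / t 0 ≤ 4 := by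
            rw [div_le_iff₀ ht0pos]
            nlinarith
          linarith
        · push_neg at ht1
          rw [if_neg (by linarith : ¬ (t 1 < 1))] at ihs
          have h2 : 4 / t 0 ≤ 3 / t 1 := by
            rw [div_le_div_iff₀ ht0pos ht1pos]
            linarith
          have ihs' : (∑ k ∈ range M, if 1 ≤ t (k + 1) then (t (k + 1))⁻¹ else 0) ≤ 4 - 3 / t 1 := ihs
          linarith

/- ## Fterm -/

noncomputable def Fterm (α : ℝ) (μ : ℕ → ℝ) (s : ℝ) (k : ℕ) : ℝ :=
  if μ k = 0 then 0 else Real.exp (-(s * μ k) ^ (-α))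

section F
variable {α C : ℝ} {μ : ℕ → ℝ}

lemma Fterm_nonneg (α : ℝ) (μ : ℕ → ℝ) (s : ℝ) (k : ℕ) : 0 ≤ Fterm α μ s k := by
  unfold Fterm
  split_ifs
  · exact le_rfl
  · exact (Real.exp_pos _).le

lemma Fterm_le_one (h0 : ∀ k, 0 ≤ μ k) {s : ℝ} (hs : 0 < s) (k : ℕ) : Fterm α μ s k ≤ 1 := by
  unfold Fterm
  split_ifs with h
  · norm_num
  · have hμ : 0 < μ k := lt_of_le_of_ne (h0 k) (Ne.symm h)
    have hnn : (0:ℝ) ≤ (s * μ k) ^ (-α) := Real.rpow_nonneg (by positivity) _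
    calc Real.exp (-(s * μ k) ^ (-α)) ≤ Real.exp 0 := Real.exp_le_exp.mpr (by linarith)
      _ = 1 := Real.exp_zero

lemma Fterm_le_sq (hα : 1 ≤ α) (h0 : ∀ k, 0 ≤ μ k) {s : ℝ} (hs : 0 < s) (k : ℕ) :
    Fterm α μ s k ≤ 4 * (s * μ k) ^ 2 := by
  unfold Fterm
  split_ifs with h
  · positivity
  · have hμ : 0 < μ k := lt_of_le_of_ne (h0 k) (Ne.symm h)
    have ht : 0 < s * μ k := by positivity
    by_cases h1 : s * μ k ≤ 1
    · exact exp_neg_rpow_le hα ht h1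
    · push_neg at h1
      have : Real.exp (-(s * μ k) ^ (-α)) ≤ 1 := by
        have hnn : (0:ℝ) ≤ (s * μ k) ^ (-α) := Real.rpow_nonneg (by positivity) _
        calc Real.exp (-(s * μ k) ^ (-α)) ≤ Real.exp 0 := Real.exp_le_exp.mpr (by linarith)
          _ = 1 := Real.exp_zero
      nlinarith
lemma Fterm_summable (hα : 1 ≤ α) (hC : 0 < C) (hmono : ∀ ⦃k l : ℕ⦄, k ≤ l → μ l ≤ μ k)
    (h0 : ∀ k, 0 ≤ μ k)
    (hM : ∀ n : ℕ, ∑ k ∈ Finset.range (n + 1), μ k ≤ C * Real.log (2 + (n : ℝ)))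
    {s : ℝ} (hs : 0 < s) : Summable (Fterm α μ s) := by
  refine Summable.of_nonneg_of_le (Fterm_nonneg α μ s) (fun k => ?_)
    ((musq_summable hC hmono h0 hM).mul_left (4*s^2))
  calc Fterm α μ s k ≤ 4 * (s * μ k)^2 := Fterm_le_sq hα h0 hs k
    _ = 4*s^2 * μ k ^2 := by ring

lemma Fterm_key (hα : 1 ≤ α) (h0 : ∀ k, 0 ≤ μ k) {s : ℝ} (hs : 0 < s) (k : ℕ) :
    Fterm α μ s k ≤ 2*s*(if 1/2 < s * μ k then μ k else 0)
      + 4*s^2*(if 1/2 < s * μ k then 0 else μ k ^ 2) := by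
  split_ifs with h
  · calc Fterm α μ s k ≤ 1 := Fterm_le_one h0 hs k
      _ ≤ 2*s*μ k := by nlinarith
      _ = 2*s*μ k + 4*s^2*0 := by ring
  · calc Fterm α μ s k ≤ 4 * (s*μ k)^2 := Fterm_le_sq hα h0 hs k
      _ = 2*s*0 + 4*s^2*μ k^2 := by ring

/-- The total heat-trace sum. -/
lemma T_le (hα : 1 ≤ α) (hC : 0 < C) (hmono : ∀ ⦃k l : ℕ⦄, k ≤ l → μ l ≤ μ k)
    (h0 : ∀ k, 0 ≤ μ k)
    (hM : ∀ n : ℕ, ∑ k ∈ Finset.range (n + 1), μ k ≤ C * Real.log (2 + (n : ℝ)))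
    {s : ℝ} (hs : 2 ≤ s) :
    ∑' k, Fterm α μ s k ≤
      2*s*(C * (Real.log (1 + 36*C^2) + 2 * Real.log s))
        + 4*s^2*((3*C/2 * Real.log s + 46*C^2) / s) := by
  have hs0 : (0:ℝ) < s := by linarith
  have hBsupp : ∀ k ∉ range ⌈36*C^2*s^2⌉₊, (if 1/2 < s * μ k then μ k else 0) = 0 := by
    intro k hk
    rw [if_neg]
    intro hbig
    have h1 := crude hC hmono h0 hM hs0 hbig
    have hk' : (⌈36*C^2*s^2⌉₊ : ℕ) ≤ k := by simpa using hk
    have hk'' : ((⌈36*C^2*s^2⌉₊:ℕ):ℝ) ≤ (k:ℝ) := by exact_mod_cast hk'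
    have := Nat.le_ceil (36*C^2*s^2)
    linarith
  have hBsumm : Summable (fun k => if 1/2 < s * μ k then μ k else 0) :=
    summable_of_ne_finset_zero hBsupp
  have hSsumm : Summable (fun k => if 1/2 < s * μ k then 0 else μ k ^ 2) := by
    apply Summable.of_nonneg_of_le _ _ (musq_summable hC hmono h0 hM)
    · intro k; split_ifs
      · exact le_rfl
      · exact sq_nonneg _
    · intro k; split_ifs
      · exact sq_nonneg _
      · exact le_rfl
  have h1 : ∑' k, Fterm α μ s k ≤
      ∑' k, (2*s*(if 1/2 < s * μ k then μ k else 0)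
        + 4*s^2*(if 1/2 < s * μ k then 0 else μ k ^ 2)) := by
    apply Summable.tsum_le_tsum (Fterm_key hα h0 hs0) (Fterm_summable hα hC hmono h0 hM hs0)
    exact Summable.add (hBsumm.mul_left _) (hSsumm.mul_left _)
  rw [Summable.tsum_add (hBsumm.mul_left _) (hSsumm.mul_left _), tsum_mul_left, tsum_mul_left] at h1
  refine h1.trans ?_
  have hB := bigsum_le hC hmono h0 hM hs
  have hS := smallsum_le hC hmono h0 hM hs
  have h2 : (0:ℝ) ≤ 2*s := by linarith
  have h3 : (0:ℝ) ≤ 4*s^2 := by positivity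
  exact add_le_add (mul_le_mul_of_nonneg_left hB h2) (mul_le_mul_of_nonneg_left hS h3)


/-- normalized heat trace sequence -/
noncomputable def xseq (α : ℝ) (μ : ℕ → ℝ) (n : ℕ) : ℝ :=
  (((n : ℝ) + 2) * Real.log ((n : ℝ) + 2))⁻¹ *
    ∑' k : ℕ, Fterm α μ (((n : ℝ) + 2)) k

lemma xseq_nonneg (α : ℝ) (μ : ℕ → ℝ) (n : ℕ) : 0 ≤ xseq α μ n := by
  unfold xseq
  have h1 : (0:ℝ) < Real.log ((n:ℝ)+2) := Real.log_pos (by push_cast; linarith [Nat.cast_nonneg (α := ℝ) n])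
  have h2 : (0:ℝ) < (n:ℝ)+2 := by positivity
  have h3 : 0 ≤ ∑' k : ℕ, Fterm α μ (((n : ℝ) + 2)) k := tsum_nonneg (Fterm_nonneg α μ _)
  positivity

/-- bound for the whole sequence -/
noncomputable def Qb (C : ℝ) : ℝ :=
  2*C*Real.log (1+36*C^2)/Real.log 2 + 10*C + 184*C^2/Real.log 2

lemma T_le_Qb {α C : ℝ} {μ : ℕ → ℝ} (hα : 1 ≤ α) (hC : 0 < C)
    (hmono : ∀ ⦃k l : ℕ⦄, k ≤ l → μ l ≤ μ k) (h0 : ∀ k, 0 ≤ μ k)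
    (hM : ∀ n : ℕ, ∑ k ∈ Finset.range (n + 1), μ k ≤ C * Real.log (2 + (n : ℝ)))
    {s : ℝ} (hs : 2 ≤ s) :
    ∑' k, Fterm α μ s k ≤ Qb C * (s * Real.log s) := by
  have hs0 : (0:ℝ) < s := by linarith
  have hLpos : 0 < Real.log s := Real.log_pos (by linarith)
  have hl2pos : (0:ℝ) < Real.log 2 := Real.log_pos (by norm_num)
  have hL2 : Real.log 2 ≤ Real.log s := Real.log_le_log (by norm_num) hs
  have ha : (0:ℝ) ≤ Real.log (1+36*C^2) := Real.log_nonneg (by nlinarith)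
  have hT := T_le hα hC hmono h0 hM hs
  have hE : 2*s*(C * (Real.log (1 + 36*C^2) + 2 * Real.log s))
      + 4*s^2*((3*C/2 * Real.log s + 46*C^2) / s)
      = 2*C*Real.log (1+36*C^2)*s + 10*C*s*Real.log s + 184*C^2*s := by
    field_simp
    ring
  rw [hE] at hT
  have h1 : (1:ℝ) ≤ Real.log s / Real.log 2 := (one_le_div hl2pos).mpr hL2
  have hq1 : 2*C*Real.log (1+36*C^2)*s ≤ 2*C*Real.log (1+36*C^2)*s * (Real.log s / Real.log 2) :=
    le_mul_of_one_le_right (by positivity) h1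
  have hq2 : 184*C^2*s ≤ 184*C^2*s * (Real.log s / Real.log 2) :=
    le_mul_of_one_le_right (by positivity) h1
  have hQexp : Qb C * (s * Real.log s) =
      2*C*Real.log (1+36*C^2)*s * (Real.log s / Real.log 2) + 10*C*s*Real.log s
        + 184*C^2*s * (Real.log s / Real.log 2) := by
    unfold Qb
    field_simp
  rw [hQexp]
  linarith

lemma xseq_le {α C : ℝ} {μ : ℕ → ℝ} (hα : 1 ≤ α) (hC : 0 < C)
    (hmono : ∀ ⦃k l : ℕ⦄, k ≤ l → μ l ≤ μ k) (h0 : ∀ k, 0 ≤ μ k)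
    (hM : ∀ n : ℕ, ∑ k ∈ Finset.range (n + 1), μ k ≤ C * Real.log (2 + (n : ℝ))) (n : ℕ) :
    xseq α μ n ≤ Qb C := by
  have hs : (2:ℝ) ≤ (n:ℝ) + 2 := by
    have : (0:ℝ) ≤ (n:ℝ) := Nat.cast_nonneg n
    linarith
  have hs0 : (0:ℝ) < (n:ℝ) + 2 := by linarith
  have hLpos : 0 < Real.log ((n:ℝ)+2) := Real.log_pos (by linarith)
  have hTQ := T_le_Qb hα hC hmono h0 hM hs
  unfold xseq
  calc (((n:ℝ)+2) * Real.log ((n:ℝ)+2))⁻¹ * ∑' k, Fterm α μ ((n:ℝ)+2) k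
      ≤ (((n:ℝ)+2) * Real.log ((n:ℝ)+2))⁻¹ * (Qb C * (((n:ℝ)+2) * Real.log ((n:ℝ)+2))) := by
        apply mul_le_mul_of_nonneg_left hTQ (by positivity)
    _ = Qb C := by
        field_simp

/-- the per-k geometric bound -/
lemma per_k {α : ℝ} (hα : 1 ≤ α) (M : ℕ) (sf : ℕ → ℝ) (hs2 : ∀ i, 2 ≤ sf i)
    (hsr : ∀ i, i + 1 < M → sf (i+1) ≤ 3/4 * sf i) (hs1 : ∀ i, sf i ≤ sf 0)
    (μk : ℝ) (hμk : 0 ≤ μk) :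
    ∑ i ∈ range M, (if μk = 0 then 0 else Real.exp (-(sf i * μk) ^ (-α))) / sf i ≤
      (if 1/2 < sf 0 * μk then 20*μk else 16 * sf 0 * μk^2) := by
  have hsfpos : ∀ i, (0:ℝ) < sf i := fun i => lt_of_lt_of_le (by norm_num) (hs2 i)
  rcases eq_or_lt_of_le hμk with h | hμpos
  · subst h
    simp
  · have hne : μk ≠ 0 := ne_of_gt hμpos
    simp only [if_neg hne]
    have htpos : ∀ i, 0 < sf i * μk := fun i => mul_pos (hsfpos i) hμpos
    have htr : ∀ i, i + 1 < M → sf (i+1) * μk ≤ 3/4 * (sf i * μk) := by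
      intro i hi
      have := mul_le_mul_of_nonneg_right (hsr i hi) hμk
      linarith
    split_ifs with hbig
    · -- big case
      have hterm : ∀ i ∈ range M, Real.exp (-(sf i * μk) ^ (-α)) / sf i ≤
          μk * (4*(if sf i * μk ≤ 1 then sf i * μk else 0)
            + (if 1 ≤ sf i * μk then (sf i * μk)⁻¹ else 0)) := by
        intro i _
        by_cases h1 : sf i * μk ≤ 1
        · rw [if_pos h1]
          have hb := exp_neg_rpow_le hα (htpos i) h1
          have hd : Real.exp (-(sf i * μk) ^ (-α)) / sf i ≤ μk * (4*(sf i * μk)) := by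
            rw [div_le_iff₀ (hsfpos i)]
            calc Real.exp (-(sf i * μk) ^ (-α)) ≤ 4 * (sf i * μk)^2 := hb
              _ = μk * (4*(sf i * μk)) * sf i := by ring
          have h2 : (0:ℝ) ≤ (if 1 ≤ sf i * μk then (sf i * μk)⁻¹ else 0) := by
            split_ifs
            · positivity
            · exact le_rfl
          nlinarith
        · push_neg at h1
          rw [if_neg (by linarith : ¬ (sf i * μk ≤ 1)), if_pos h1.le]
          have hb : Real.exp (-(sf i * μk) ^ (-α)) ≤ 1 := by
            have hnn : (0:ℝ) ≤ (sf i * μk) ^ (-α) := Real.rpow_nonneg (htpos i).le _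
            calc Real.exp (-(sf i * μk) ^ (-α)) ≤ Real.exp 0 := Real.exp_le_exp.mpr (by linarith)
              _ = 1 := Real.exp_zero
          have he : μk * (4*0 + (sf i * μk)⁻¹) = (sf i)⁻¹ := by
            field_simp [hne, (hsfpos i).ne']
            ring
          rw [he, div_eq_mul_inv]
          calc Real.exp (-(sf i * μk) ^ (-α)) * (sf i)⁻¹ ≤ 1 * (sf i)⁻¹ :=
                mul_le_mul_of_nonneg_right hb (inv_nonneg.mpr (hsfpos i).le)
            _ = (sf i)⁻¹ := one_mul _
      calc ∑ i ∈ range M, Real.exp (-(sf i * μk) ^ (-α)) / sf i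
          ≤ ∑ i ∈ range M, μk * (4*(if sf i * μk ≤ 1 then sf i * μk else 0)
            + (if 1 ≤ sf i * μk then (sf i * μk)⁻¹ else 0)) := sum_le_sum hterm
        _ = (4*μk) * (∑ i ∈ range M, (if sf i * μk ≤ 1 then sf i * μk else 0))
            + μk * ∑ i ∈ range M, (if 1 ≤ sf i * μk then (sf i * μk)⁻¹ else 0) := by
            rw [mul_sum, mul_sum, ← sum_add_distrib]
            exact sum_congr rfl fun i _ => by ring
        _ ≤ (4*μk) * 4 + μk * 4 := by
            have hB : ∑ i ∈ range M, (if sf i * μk ≤ 1 then sf i * μk else 0) ≤ 4 :=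
              partB M (fun i => sf i * μk) htpos htr
            have hA : ∑ i ∈ range M, (if 1 ≤ sf i * μk then (sf i * μk)⁻¹ else 0) ≤ 4 :=
              partA M (fun i => sf i * μk) htpos htr
            have h4μ : (0:ℝ) ≤ 4*μk := by linarith
            exact add_le_add (mul_le_mul_of_nonneg_left hB h4μ)
              (mul_le_mul_of_nonneg_left hA hμk)
        _ = 20 * μk := by ring
    · -- small case
      push_neg at hbig
      have hterm : ∀ i ∈ range M, Real.exp (-(sf i * μk) ^ (-α)) / sf i ≤
          4 * μk * (sf i * μk) := by
        intro i _
        have hle : sf i * μk ≤ sf 0 * μk := mul_le_mul_of_nonneg_right (hs1 i) hμk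
        have h1 : sf i * μk ≤ 1 := by linarith
        have hb := exp_neg_rpow_le hα (htpos i) h1
        rw [div_le_iff₀ (hsfpos i)]
        calc Real.exp (-(sf i * μk) ^ (-α)) ≤ 4 * (sf i * μk)^2 := hb
          _ = 4 * μk * (sf i * μk) * sf i := by ring
      calc ∑ i ∈ range M, Real.exp (-(sf i * μk) ^ (-α)) / sf i
          ≤ ∑ i ∈ range M, 4 * μk * (sf i * μk) := sum_le_sum hterm
        _ = 4 * μk * ∑ i ∈ range M, sf i * μk := by rw [mul_sum]
        _ ≤ 4 * μk * (4 * (sf 0 * μk)) := by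
            have hg : ∑ i ∈ range M, sf i * μk ≤ 4 * (sf 0 * μk) :=
              geo_sum M (fun i => sf i * μk) (fun i => (htpos i).le) htr
            apply mul_le_mul_of_nonneg_left hg (by positivity)
        _ = 16 * sf 0 * μk^2 := by ring


end F

noncomputable def K0 (C : ℝ) : ℝ := 20*C*Real.log (1+36*C^2) + 736*C^2

noncomputable def Q1 (C : ℝ) : ℝ := 2*(K0 C) + 128*C

lemma K0_nonneg {C : ℝ} (hC : 0 < C) : 0 ≤ K0 C := by
  unfold K0
  have ha : (0:ℝ) ≤ Real.log (1+36*C^2) := Real.log_nonneg (by nlinarith)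
  nlinarith

lemma avg_bound {α C : ℝ} {μ : ℕ → ℝ} (hα : 1 ≤ α) (hC : 0 < C)
    (hmono : ∀ ⦃k l : ℕ⦄, k ≤ l → μ l ≤ μ k) (h0 : ∀ k, 0 ≤ μ k)
    (hM : ∀ n : ℕ, ∑ k ∈ Finset.range (n + 1), μ k ≤ C * Real.log (2 + (n : ℝ)))
    (M j : ℕ) (hM1 : 1 ≤ M) (hj : 8 * 4^M ≤ j) :
    ∑ i ∈ range M, xseq α μ (j / 2^(i+1)) ≤ Q1 C := by
  classical
  set sf : ℕ → ℝ := fun i => ((j / 2^(i+1) : ℕ) : ℝ) + 2 with hsf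
  -- basic facts about j
  have hj32n : 32 ≤ j := by
    calc 32 = 8 * 4^1 := by norm_num
      _ ≤ 8 * 4^M := by
          have := Nat.pow_le_pow_right (by norm_num : 0 < 4) hM1
          omega
      _ ≤ j := hj
  have hj32 : (32:ℝ) ≤ (j:ℝ) := by exact_mod_cast hj32n
  have hjpos : (0:ℝ) < (j:ℝ) := by linarith
  have hlogj : (1:ℝ) ≤ Real.log j := by
    have h3 : Real.exp 1 < (j:ℝ) := by
      have := Real.exp_one_lt_d9
      linarith
    have := (Real.lt_log_iff_exp_lt hjpos).mpr h3
    linarith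
  have hlogjpos : (0:ℝ) < Real.log j := by linarith
  -- facts about sf
  have hs2 : ∀ i, (2:ℝ) ≤ sf i := by
    intro i
    have : (0:ℝ) ≤ ((j / 2^(i+1) : ℕ):ℝ) := Nat.cast_nonneg _
    simp only [hsf]
    linarith
  have hsfpos : ∀ i, (0:ℝ) < sf i := fun i => lt_of_lt_of_le (by norm_num) (hs2 i)
  have hs1 : ∀ i, sf i ≤ sf 0 := by
    intro i
    have hdiv : j / 2^(i+1) ≤ j / 2^(0+1) :=
      Nat.div_le_div_left (Nat.pow_le_pow_right (by norm_num) (by omega)) (by positivity)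
    have : ((j / 2^(i+1) : ℕ):ℝ) ≤ ((j / 2^(0+1) : ℕ):ℝ) := by exact_mod_cast hdiv
    simp only [hsf]
    linarith
  have hsr : ∀ i, i + 1 < M → sf (i+1) ≤ 3/4 * sf i := by
    intro i hi
    have hdd : j / 2^(i+1+1) = (j / 2^(i+1)) / 2 := by
      rw [Nat.div_div_eq_div_mul, ← pow_succ]
    have hn8 : 8 ≤ j / 2^(i+1) := by
      rw [Nat.le_div_iff_mul_le (by positivity)]
      calc 8 * 2^(i+1) ≤ 8 * 2^M := by
            have := Nat.pow_le_pow_right (by norm_num : 0 < 2) (by omega : i+1 ≤ M)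
            omega
        _ ≤ 8 * 4^M := by
            have := Nat.pow_le_pow_left (by norm_num : 2 ≤ 4) M
            omega
        _ ≤ j := hj
    have hn8' : (8:ℝ) ≤ ((j / 2^(i+1) : ℕ):ℝ) := by exact_mod_cast hn8
    have hhalf : ((j / 2^(i+1) / 2 : ℕ):ℝ) ≤ ((j / 2^(i+1) : ℕ):ℝ) / 2 := Nat.cast_div_le
    simp only [hsf, hdd]
    linarith
  have hsqj : ∀ i, i < M → Real.sqrt (j:ℝ) ≤ sf i := by
    intro i hi
    have h2p : (0:ℝ) < (2:ℝ)^(i+1) := by positivity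
    have hq : (j:ℝ)/2^(i+1) - 1 < ((j / 2^(i+1) : ℕ):ℝ) := by
      have hdm := Nat.div_add_mod j (2^(i+1))
      have hmod : j % 2^(i+1) < 2^(i+1) := Nat.mod_lt _ (by positivity)
      have hdm' : ((2:ℝ))^(i+1) * ((j / 2^(i+1) : ℕ):ℝ) + ((j % 2^(i+1) : ℕ):ℝ) = (j:ℝ) := by
        exact_mod_cast congrArg (Nat.cast : ℕ → ℝ) hdm
      have hmod' : ((j % 2^(i+1) : ℕ):ℝ) < (2:ℝ)^(i+1) := by exact_mod_cast hmod
      rw [div_sub' (ne_of_gt h2p), div_lt_iff₀ h2p]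
      nlinarith
    have h2M : (2:ℝ)^M ≤ Real.sqrt (j:ℝ) := by
      rw [show ((2:ℝ)^M) = ((2:ℝ)^M) from rfl]
      have h4M : ((2:ℝ)^M)^2 ≤ (j:ℝ) := by
        have : ((2:ℝ)^M)^2 = 4^M := by
          rw [← pow_mul, mul_comm, pow_mul]
          norm_num
        rw [this]
        have h4n : (4:ℕ)^M ≤ j := le_trans (by omega) hj
        exact_mod_cast h4n
      exact (Real.le_sqrt (by positivity) (by positivity)).mpr h4M
    have hjm : Real.sqrt (j:ℝ) ≤ (j:ℝ)/2^M := by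
      rw [le_div_iff₀ (by positivity)]
      calc Real.sqrt (j:ℝ) * 2^M ≤ Real.sqrt (j:ℝ) * Real.sqrt (j:ℝ) :=
            mul_le_mul_of_nonneg_left h2M (Real.sqrt_nonneg _)
        _ = (j:ℝ) := Real.mul_self_sqrt hjpos.le
    have hjm2 : (j:ℝ)/2^M ≤ (j:ℝ)/2^(i+1) := by
      apply div_le_div_of_nonneg_left hjpos.le h2p
      have : (2:ℕ)^(i+1) ≤ 2^M := Nat.pow_le_pow_right (by norm_num) (by omega)
      exact_mod_cast this
    have hfin : (j:ℝ)/2^(i+1) ≤ sf i := by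
      simp only [hsf]
      linarith
    calc Real.sqrt (j:ℝ) ≤ (j:ℝ)/2^M := hjm
      _ ≤ (j:ℝ)/2^(i+1) := hjm2
      _ ≤ sf i := hfin
  -- per-index bound: xseq ≤ (2/log j) * (T i / sf i)
  have hxle : ∀ i ∈ range M, xseq α μ (j / 2^(i+1)) ≤
      (2/Real.log j) * ((∑' k, Fterm α μ (sf i) k) / sf i) := by
    intro i hi
    have hlogsf : (1/2) * Real.log j ≤ Real.log (sf i) := by
      have h1 : Real.log (Real.sqrt (j:ℝ)) ≤ Real.log (sf i) :=
        Real.log_le_log (Real.sqrt_pos.mpr hjpos) (hsqj i (mem_range.mp hi))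
      rw [Real.log_sqrt hjpos.le] at h1
      linarith
    have hlogsfpos : 0 < Real.log (sf i) := by linarith
    have hTnn : (0:ℝ) ≤ ∑' k, Fterm α μ (sf i) k := tsum_nonneg (Fterm_nonneg α μ _)
    have hinv : (Real.log (sf i))⁻¹ ≤ 2 / Real.log j := by
      have h2 : ((1/2) * Real.log j)⁻¹ = 2 / Real.log j := by
        rw [mul_inv, inv_div]
        field_simp
      rw [← h2]
      exact inv_anti₀ (by linarith) hlogsf
    have hxeq : xseq α μ (j / 2^(i+1)) =
        (Real.log (sf i))⁻¹ * ((∑' k, Fterm α μ (sf i) k) / sf i) := by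
      unfold xseq
      simp only [hsf]
      rw [mul_inv]
      ring
    rw [hxeq]
    apply mul_le_mul_of_nonneg_right hinv
    positivity
  have hstep1 : ∑ i ∈ range M, xseq α μ (j / 2^(i+1)) ≤
      (2/Real.log j) * ∑ i ∈ range M, ((∑' k, Fterm α μ (sf i) k) / sf i) := by
    rw [mul_sum]
    exact sum_le_sum hxle
  -- swap the sums
  have hFsum : ∀ i, Summable (Fterm α μ (sf i)) := fun i =>
    Fterm_summable hα hC hmono h0 hM (hsfpos i)
  have hswap : ∑ i ∈ range M, ((∑' k, Fterm α μ (sf i) k) / sf i) =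
      ∑' k, ∑ i ∈ range M, Fterm α μ (sf i) k / sf i := by
    rw [Summable.tsum_finsetSum (fun i _ => (hFsum i).div_const _)]
    exact sum_congr rfl fun i _ => (tsum_div_const).symm
  -- pointwise bound by G
  have hG : ∀ k, ∑ i ∈ range M, Fterm α μ (sf i) k / sf i ≤
      20*(if 1/2 < sf 0 * μ k then μ k else 0)
        + 16 * sf 0 * (if 1/2 < sf 0 * μ k then 0 else μ k ^ 2) := by
    intro k
    have hpk := per_k hα M sf hs2 hsr hs1 (μ k) (h0 k)
    have heq : ∑ i ∈ range M, Fterm α μ (sf i) k / sf i =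
        ∑ i ∈ range M, (if μ k = 0 then 0 else Real.exp (-(sf i * μ k) ^ (-α))) / sf i := rfl
    rw [heq]
    refine hpk.trans ?_
    split_ifs
    · linarith
    · linarith
  -- summability of G
  have hBsupp : ∀ k ∉ range ⌈36*C^2*(sf 0)^2⌉₊, (if 1/2 < sf 0 * μ k then μ k else 0) = 0 := by
    intro k hk
    rw [if_neg]
    intro hbig
    have h1 := crude hC hmono h0 hM (hsfpos 0) hbig
    have hk' : (⌈36*C^2*(sf 0)^2⌉₊ : ℕ) ≤ k := by simpa using hk
    have hk'' : ((⌈36*C^2*(sf 0)^2⌉₊:ℕ):ℝ) ≤ (k:ℝ) := by exact_mod_cast hk'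
    have := Nat.le_ceil (36*C^2*(sf 0)^2)
    linarith
  have hBsumm : Summable (fun k => if 1/2 < sf 0 * μ k then μ k else 0) :=
    summable_of_ne_finset_zero hBsupp
  have hSsumm : Summable (fun k => if 1/2 < sf 0 * μ k then 0 else μ k ^ 2) := by
    apply Summable.of_nonneg_of_le _ _ (musq_summable hC hmono h0 hM)
    · intro k
      split_ifs
      · exact le_rfl
      · exact sq_nonneg _
    · intro k
      split_ifs
      · exact sq_nonneg _
      · exact le_rfl
  have hGsumm : Summable (fun k => 20*(if 1/2 < sf 0 * μ k then μ k else 0)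
      + 16 * sf 0 * (if 1/2 < sf 0 * μ k then 0 else μ k ^ 2)) :=
    Summable.add (hBsumm.mul_left _) (hSsumm.mul_left _)
  have hLHSsumm : Summable (fun k => ∑ i ∈ range M, Fterm α μ (sf i) k / sf i) :=
    summable_sum (fun i _ => (hFsum i).div_const _)
  have hts : ∑' k, ∑ i ∈ range M, Fterm α μ (sf i) k / sf i ≤
      20 * (∑' k, (if 1/2 < sf 0 * μ k then μ k else 0))
        + 16 * sf 0 * (∑' k, (if 1/2 < sf 0 * μ k then 0 else μ k ^ 2)) := by
    rw [← tsum_mul_left, ← tsum_mul_left,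
      ← Summable.tsum_add (hBsumm.mul_left _) (hSsumm.mul_left _)]
    exact Summable.tsum_le_tsum hG hLHSsumm hGsumm
  -- apply bigsum/smallsum
  have hBig := bigsum_le hC hmono h0 hM (hs2 0)
  have hSmall := smallsum_le hC hmono h0 hM (hs2 0)
  have hlogsf0 : Real.log (sf 0) ≤ Real.log j := by
    apply Real.log_le_log (hsfpos 0)
    have hc : ((j / 2^(0+1) : ℕ):ℝ) ≤ (j:ℝ)/2 := by
      have := Nat.cast_div_le (α := ℝ) (m := j) (n := 2^(0+1))
      simpa using this
    simp only [hsf]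
    linarith
  have hlogsf0nn : 0 ≤ Real.log (sf 0) := Real.log_nonneg (by linarith [hs2 0])
  have hfinal : 20 * (∑' k, (if 1/2 < sf 0 * μ k then μ k else 0))
      + 16 * sf 0 * (∑' k, (if 1/2 < sf 0 * μ k then 0 else μ k ^ 2)) ≤
      K0 C + 64 * C * Real.log j := by
    have h1 : 20 * (∑' k, (if 1/2 < sf 0 * μ k then μ k else 0)) ≤
        20 * (C * (Real.log (1 + 36*C^2) + 2 * Real.log (sf 0))) :=
      mul_le_mul_of_nonneg_left hBig (by norm_num)
    have h2 : 16 * sf 0 * (∑' k, (if 1/2 < sf 0 * μ k then 0 else μ k ^ 2)) ≤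
        16 * sf 0 * ((3*C/2 * Real.log (sf 0) + 46*C^2) / sf 0) := by
      apply mul_le_mul_of_nonneg_left hSmall (by positivity)
    have h3 : 16 * sf 0 * ((3*C/2 * Real.log (sf 0) + 46*C^2) / sf 0) =
        24*C*Real.log (sf 0) + 736*C^2 := by
      field_simp [(hsfpos 0).ne']
      ring
    rw [h3] at h2
    unfold K0
    have h4 : Real.log (sf 0) ≤ Real.log j := hlogsf0
    nlinarith [hC]
  -- put everything together
  have hQnn : 0 ≤ K0 C := K0_nonneg hC
  calc ∑ i ∈ range M, xseq α μ (j / 2^(i+1))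
      ≤ (2/Real.log j) * ∑ i ∈ range M, ((∑' k, Fterm α μ (sf i) k) / sf i) := hstep1
    _ ≤ (2/Real.log j) * (K0 C + 64 * C * Real.log j) := by
        apply mul_le_mul_of_nonneg_left _ (by positivity)
        rw [hswap]
        exact hts.trans hfinal
    _ = 2*(K0 C)/Real.log j + 128*C := by
        field_simp
        ring
    _ ≤ Q1 C := by
        unfold Q1
        have : 2*(K0 C)/Real.log j ≤ 2*(K0 C) := by
          apply div_le_self (by linarith) hlogj
        linarith


/- ## extended limit machinery -/

lemma bdd_dil {x : ℕ → ℝ} (hb : BddSeq x) (m : ℕ) : BddSeq (fun j => x (j / m)) := by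
  obtain ⟨B, hB⟩ := hb
  exact ⟨B, fun j => hB _⟩

lemma bdd_sum_dil {x : ℕ → ℝ} (hb : BddSeq x) (M : ℕ) :
    BddSeq (fun j => ∑ i ∈ range M, x (j / 2^(i+1))) := by
  obtain ⟨B, hB⟩ := hb
  refine ⟨M * B, fun j => ?_⟩
  calc |∑ i ∈ range M, x (j / 2^(i+1))| ≤ ∑ i ∈ range M, |x (j / 2^(i+1))| :=
        Finset.abs_sum_le_sum_abs _ _
    _ ≤ ∑ _i ∈ range M, B := sum_le_sum fun i _ => hB _
    _ = M * B := by rw [sum_const, card_range, nsmul_eq_mul]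

lemma omega_le {ω : (ℕ → ℝ) → ℝ} (hω : ExtLimit ω) (y : ℕ → ℝ) (c : ℝ)
    (hb : BddSeq y) (hnn : ∀ n, 0 ≤ y n) (N : ℕ) (hc : ∀ n, N ≤ n → y n ≤ c) :
    ω y ≤ c := by
  obtain ⟨B, hB⟩ := hb
  have hB0 : 0 ≤ B := le_trans (abs_nonneg _) (hB 0)
  set z : ℕ → ℝ := fun n => min (y n) c with hz
  have hzb : BddSeq z := by
    refine ⟨B + |c|, fun n => ?_⟩
    rcases min_cases (y n) c with ⟨h1, _⟩ | ⟨h1, _⟩ <;> rw [hz] <;> simp only <;> rw [h1]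
    · have := hB n
      have := abs_nonneg c
      linarith
    · have := abs_nonneg (y n)
      have := hB n
      linarith
  have hdb : BddSeq (fun n => y n - z n) := by
    refine ⟨2*B + |c|, fun n => ?_⟩
    have h1 := hB n
    have h2 : |z n| ≤ B + |c| := by
      rcases min_cases (y n) c with ⟨h1', _⟩ | ⟨h1', _⟩ <;> rw [hz] <;> simp only <;> rw [h1']
      · have := abs_nonneg c
        linarith
      · have := abs_nonneg (y n)
        linarith
    calc |y n - z n| ≤ |y n| + |z n| := abs_sub _ _
      _ ≤ 2*B + |c| := by linarith
  have hdlim : Filter.Tendsto (fun n => y n - z n) Filter.atTop (nhds 0) := by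
    apply Filter.Tendsto.congr' _ tendsto_const_nhds
    filter_upwards [Filter.eventually_ge_atTop N] with n hn
    have : z n = y n := min_eq_left (hc n hn)
    rw [this]
    ring
  have hωd : ω (fun n => y n - z n) = 0 := hω.extends_limit _ 0 hdlim
  have hyz : y = z + (fun n => y n - z n) := by
    funext n
    simp
  have hωy : ω y = ω z := by
    conv_lhs => rw [hyz]
    rw [hω.map_add z _ hzb hdb, hωd, add_zero]
  -- ω z ≤ c
  have hcb : BddSeq (fun _ : ℕ => c) := ⟨|c|, fun _ => le_rfl⟩
  have hnegz : BddSeq ((-1 : ℝ) • z) := by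
    obtain ⟨B', hB'⟩ := hzb
    refine ⟨B', fun n => ?_⟩
    simp only [Pi.smul_apply, smul_eq_mul]
    rw [show (-1 : ℝ) * z n = -(z n) by ring, abs_neg]
    exact hB' n
  have hw : (fun _ : ℕ => c) + (-1 : ℝ) • z = fun n => c - z n := by
    funext n
    simp
    ring
  have hwnn : ∀ n, 0 ≤ ((fun _ : ℕ => c) + (-1 : ℝ) • z) n := by
    intro n
    rw [hw]
    have : z n ≤ c := min_le_right _ _
    simp only
    linarith
  have hwb : BddSeq ((fun _ : ℕ => c) + (-1 : ℝ) • z) := by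
    obtain ⟨B', hB'⟩ := hnegz
    refine ⟨|c| + B', fun n => ?_⟩
    calc |((fun _ : ℕ => c) + (-1 : ℝ) • z) n| = |c + ((-1 : ℝ) • z) n| := rfl
      _ ≤ |c| + |((-1 : ℝ) • z) n| := abs_add_le _ _
      _ ≤ |c| + B' := by linarith [hB' n]
  have hpos := hω.pos _ hwb hwnn
  have hsplit : ω ((fun _ : ℕ => c) + (-1 : ℝ) • z) = c + (-1) * ω z := by
    rw [hω.map_add _ _ hcb hnegz, hω.extends_limit _ c tendsto_const_nhds,
      hω.map_smul (-1) z hzb]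
  rw [hsplit] at hpos
  linarith [hωy, hpos]

lemma omega_sum {ω : (ℕ → ℝ) → ℝ} (hω : ExtLimit ω) (x : ℕ → ℝ) (hb : BddSeq x) (M : ℕ) :
    ω (fun j => ∑ i ∈ range M, x (j / 2^(i+1))) = (M : ℝ) * ω x := by
  induction M with
  | zero =>
    have he : (fun j : ℕ => ∑ i ∈ range 0, x (j / 2^(i+1))) = fun _ => (0:ℝ) := by
      funext j
      simp
    rw [he, hω.extends_limit _ 0 tendsto_const_nhds]
    simp
  | succ M ih =>
    have he : (fun j : ℕ => ∑ i ∈ range (M+1), x (j / 2^(i+1))) =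
        (fun j : ℕ => ∑ i ∈ range M, x (j / 2^(i+1))) + (fun j : ℕ => x (j / 2^(M+1))) := by
      funext j
      simp [sum_range_succ]
    rw [he, hω.map_add _ _ (bdd_sum_dil hb M) (bdd_dil hb _), ih,
      hω.dilation_invariant x hb (2^(M+1)) (by
        calc 2 = 2^1 := by norm_num
          _ ≤ 2^(M+1) := Nat.pow_le_pow_right (by norm_num) (by omega))]
    push_cast
    ring

end Stmt6

/-- If `(μ_k)` is nonincreasing, nonnegative, with
`∑_{k=0}^n μ_k ≤ C log(2+n)` (i.e. the eigenvalue sequence of a positive operator in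
`M_{1,∞}`), then for `α > 1` the sequence
`x_n = ((n+2) log(n+2))⁻¹ ∑_k exp(−((n+2) μ_k)^{−α})` is bounded and `ω(x) = 0` for every
dilation invariant extended limit `ω`. -/
theorem stmt6 (ω : (ℕ → ℝ) → ℝ) (hω : ExtLimit ω) (α C : ℝ) (hα : 1 < α) (hC : 0 < C)
    (μ : ℕ → ℝ) (hmono : ∀ ⦃k l : ℕ⦄, k ≤ l → μ l ≤ μ k) (h0 : ∀ k, 0 ≤ μ k)
    (hM : ∀ n : ℕ, ∑ k ∈ Finset.range (n + 1), μ k ≤ C * Real.log (2 + (n : ℝ))) :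
    BddSeq (fun n : ℕ => (((n : ℝ) + 2) * Real.log ((n : ℝ) + 2))⁻¹ *
        ∑' k : ℕ, if μ k = 0 then (0 : ℝ) else
          Real.exp (-(((((n : ℝ) + 2)) * μ k) ^ (-α)))) ∧
      ω (fun n : ℕ => (((n : ℝ) + 2) * Real.log ((n : ℝ) + 2))⁻¹ *
        ∑' k : ℕ, if μ k = 0 then (0 : ℝ) else
          Real.exp (-(((((n : ℝ) + 2)) * μ k) ^ (-α)))) = 0 := by
  open Stmt6 in
  have hα1 : 1 ≤ α := hα.le
  show BddSeq (Stmt6.xseq α μ) ∧ ω (Stmt6.xseq α μ) = 0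
  have hb : BddSeq (Stmt6.xseq α μ) := by
    refine ⟨Stmt6.Qb C, fun n => ?_⟩
    rw [abs_of_nonneg (Stmt6.xseq_nonneg α μ n)]
    exact Stmt6.xseq_le hα1 hC hmono h0 hM n
  refine ⟨hb, ?_⟩
  have hnn := Stmt6.xseq_nonneg α μ
  have hge : 0 ≤ ω (Stmt6.xseq α μ) := hω.pos _ hb hnn
  have hcore : ∀ M : ℕ, 1 ≤ M → (M:ℝ) * ω (Stmt6.xseq α μ) ≤ Stmt6.Q1 C := by
    intro M hM1
    have hsum := Stmt6.omega_sum hω (Stmt6.xseq α μ) hb M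
    have hle : ω (fun j => ∑ i ∈ Finset.range M, Stmt6.xseq α μ (j / 2^(i+1))) ≤ Stmt6.Q1 C := by
      apply Stmt6.omega_le hω _ _ (Stmt6.bdd_sum_dil hb M)
        (fun j => Finset.sum_nonneg fun i _ => Stmt6.xseq_nonneg α μ _) (8 * 4^M)
      intro j hj
      exact Stmt6.avg_bound hα1 hC hmono h0 hM M j hM1 hj
    linarith [hsum, hle]
  have hle0 : ω (Stmt6.xseq α μ) ≤ 0 := by
    by_contra hcon
    push_neg at hcon
    obtain ⟨M, hMgt⟩ := exists_nat_gt (Stmt6.Q1 C / ω (Stmt6.xseq α μ))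
    have hcore' := hcore (M+1) (by omega)
    have h2 : Stmt6.Q1 C / ω (Stmt6.xseq α μ) < ((M+1:ℕ):ℝ) := by
      push_cast
      push_cast at hMgt
      linarith
    have h3 : Stmt6.Q1 C < ((M+1:ℕ):ℝ) * ω (Stmt6.xseq α μ) := by
      rw [div_lt_iff₀ hcon] at h2
      linarith
    linarith
  linarith
end
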